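/- arXiv:2004.01236 — 6 statements merged into one kernel-verified Lean document; each statement's English description precedes it below -/
import Mathlib

section
/- Let λ be a labeling of G_oct such that every face satisfies the strict triangle inequality (each of the three edge lengths of a face is strictly smaller than the sum of the other two). Call a map q : E_oct → ℝ³ a compatible spherical realization if ‖q(e)‖ = 1 for all e ∈ E_oct and, for every face {i,j,m} and every two of its edges e = {i,j} and f = {m,j} with common vertex j, one has ℓ_{ij} · ℓ_{mj} · ⟪q(e), q(f)⟫ = (λ{i,j}² + λ{m,j}² − λ{i,m}²)/2. Then: (a) for every realization ρ compatible with λ, the map q_ρ defined by q_ρ({i,j}) = (ρ(i) − ρ(j))/λ({i,j}) for each directed edge (i,j) of the fixed orientation is a compatible spherical realization; (b) the assignment ρ ↦ q_ρ induces a bijection between the set of realizations compatible with λ modulo translations of ℝ³ and the set of compatible spherical realizations. -/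
open EuclideanGeometry

noncomputable section

/-- Points of Euclidean 3-space. -/
abbrev Pt : Type := EuclideanSpace ℝ (Fin 3)

/-- The vertex set of the octahedral graph. -/
def octV : Finset ℕ := {1, 2, 3, 4, 5, 6}

/-- `{i, j}` is an edge of the octahedral graph `G_oct`. -/
def IsOctEdge (i j : ℕ) : Prop :=
  i ∈ octV ∧ j ∈ octV ∧ i ≠ j ∧
    ({i, j} : Finset ℕ) ≠ {1, 2} ∧ ({i, j} : Finset ℕ) ≠ {3, 4} ∧ ({i, j} : Finset ℕ) ≠ {5, 6}

/-- `{i, j, k}` is a face of the octahedron. -/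
def IsOctFace (i j k : ℕ) : Prop :=
  ({i, j, k} : Finset ℕ) ∈
    ({ {1,3,5}, {1,3,6}, {1,4,5}, {1,4,6}, {2,3,5}, {2,3,6}, {2,4,5}, {2,4,6} } :
      Finset (Finset ℕ))

/-- A realization `ρ` is compatible with the labeling `lam`. -/
def Compatible (lam : Sym2 ℕ → ℝ) (ρ : ℕ → Pt) : Prop :=
  ∀ i j, IsOctEdge i j → dist (ρ i) (ρ j) = lam s(i, j)

/-- The fixed orientation of the edges of `G_oct`. -/
def dOrient : List (ℕ × ℕ) :=
  [(1,6), (1,3), (4,1), (5,1), (6,3), (4,6), (6,2), (3,5), (3,2), (5,4), (2,4), (2,5)]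

/-- The signed length `ℓ_{ij}`: it equals `λ{i,j}` if `(i,j)` belongs to the fixed
orientation and `-λ{i,j}` otherwise. -/
def sgnLen (lam : Sym2 ℕ → ℝ) (i j : ℕ) : ℝ :=
  if (i, j) ∈ dOrient then lam s(i, j) else - lam s(i, j)

/-- The edges of `G_oct`, i.e. the set `E_oct`, as a subtype of `Sym2 ℕ`. -/
abbrev OctE : Type := {e : Sym2 ℕ // ∃ i j, IsOctEdge i j ∧ e = s(i, j)}

/-- `q : E_oct → ℝ³` is a compatible spherical realization for the labeling `lam`:
all points are on the unit sphere and for every face `{i,j,m}` and every two of its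
edges `{i,j}` and `{m,j}` with common vertex `j` one has
`ℓ_{ij} ⬝ ℓ_{mj} ⬝ ⟪q{i,j}, q{m,j}⟫ = (λ{i,j}² + λ{m,j}² − λ{i,m}²)/2`. -/
def SphCompatible (lam : Sym2 ℕ → ℝ) (q : OctE → Pt) : Prop :=
  (∀ e : OctE, ‖q e‖ = 1) ∧
  ∀ (e f : OctE) (i j m : ℕ), IsOctFace i j m →
    (e : Sym2 ℕ) = s(i, j) → (f : Sym2 ℕ) = s(m, j) →
    sgnLen lam i j * sgnLen lam m j * (inner ℝ (q e) (q f) : ℝ) =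
      (lam s(i, j) ^ 2 + lam s(m, j) ^ 2 - lam s(i, m) ^ 2) / 2

/-- `q` agrees with the spherical realization `q_ρ` induced by the realization `ρ`:
for every directed edge `(i, j)` of the fixed orientation,
`q {i,j} = (ρ i − ρ j) / λ{i,j}`. -/
def InducedSph (lam : Sym2 ℕ → ℝ) (ρ : ℕ → Pt) (q : OctE → Pt) : Prop :=
  ∀ (e : OctE) (p : ℕ × ℕ), p ∈ dOrient → (e : Sym2 ℕ) = s(p.1, p.2) →
    q e = (lam s(p.1, p.2))⁻¹ • (ρ p.1 - ρ p.2)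

-- ### auxiliary lemmas

instance (i j : ℕ) : Decidable (IsOctEdge i j) := by unfold IsOctEdge; infer_instance
instance (i j m : ℕ) : Decidable (IsOctFace i j m) := by unfold IsOctFace; infer_instance

lemma L_orient : ∀ i ∈ octV, ∀ j ∈ octV, IsOctEdge i j →
    ((i,j) ∈ dOrient ∧ (j,i) ∉ dOrient) ∨ ((j,i) ∈ dOrient ∧ (i,j) ∉ dOrient) := by decide
lemma L_faceEdges' : ∀ i ∈ octV, ∀ j ∈ octV, ∀ m ∈ octV, IsOctFace i j m →
    IsOctEdge i j ∧ IsOctEdge m j ∧ IsOctEdge i m := by decide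
lemma L_dir : ∀ p ∈ dOrient, IsOctEdge p.1 p.2 := by decide

lemma face_sub {i j m : ℕ} (h : IsOctFace i j m) : i ∈ octV ∧ j ∈ octV ∧ m ∈ octV := by
  unfold IsOctFace at h
  simp only [Finset.mem_insert, Finset.mem_singleton] at h
  have sub : ∀ x, x ∈ ({i,j,m}:Finset ℕ) → x ∈ octV := by
    rcases h with h|h|h|h|h|h|h|h <;> (intro x hx; rw [h] at hx; fin_cases hx <;> decide)
  exact ⟨sub i (by simp), sub j (by simp), sub m (by simp)⟩

lemma orient_of_edge {i j : ℕ} (h : IsOctEdge i j) :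
    ((i,j) ∈ dOrient ∧ (j,i) ∉ dOrient) ∨ ((j,i) ∈ dOrient ∧ (i,j) ∉ dOrient) :=
  L_orient i h.1 j h.2.1 h

lemma faceEdges {i j m : ℕ} (h : IsOctFace i j m) :
    IsOctEdge i j ∧ IsOctEdge m j ∧ IsOctEdge i m := by
  obtain ⟨bi, bj, bm⟩ := face_sub h
  exact L_faceEdges' i bi j bj m bm h

lemma edge_symm {i j : ℕ} (h : IsOctEdge i j) : IsOctEdge j i := by
  obtain ⟨a, b, c, d, e, f⟩ := h
  exact ⟨b, a, c.symm, by rwa [Finset.pair_comm], by rwa [Finset.pair_comm],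
    by rwa [Finset.pair_comm]⟩

lemma face_swap12 {i j m : ℕ} (h : IsOctFace i j m) : IsOctFace j i m := by
  unfold IsOctFace at *; rwa [Finset.insert_comm j i]

lemma face_swap23 {i j m : ℕ} (h : IsOctFace i j m) : IsOctFace i m j := by
  unfold IsOctFace at *; rwa [Finset.pair_comm m j]

lemma sgn_neg (lam : Sym2 ℕ → ℝ) {i j : ℕ} (h : IsOctEdge i j) :
    sgnLen lam j i = - sgnLen lam i j := by
  rcases orient_of_edge h with ⟨h1, h2⟩ | ⟨h1, h2⟩ <;>
    simp [sgnLen, h1, h2, Sym2.eq_swap]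

lemma sgn_sq (lam : Sym2 ℕ → ℝ) (i j : ℕ) : (sgnLen lam i j) ^ 2 = lam s(i, j) ^ 2 := by
  unfold sgnLen; split <;> ring

def mkE (i j : ℕ) (h : IsOctEdge i j) : OctE := ⟨s(i,j), i, j, h, rfl⟩

lemma sgn_abs (lam : Sym2 ℕ → ℝ) {i j : ℕ} (h : IsOctEdge i j)
    (hpos : ∀ i j, IsOctEdge i j → 0 < lam s(i, j)) :
    |sgnLen lam i j| = lam s(i, j) := by
  unfold sgnLen; split
  · exact abs_of_pos (hpos i j h)
  · rw [abs_neg]; exact abs_of_pos (hpos i j h)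

lemma face_closure (lam : Sym2 ℕ → ℝ) (q : OctE → Pt) (hq : SphCompatible lam q)
    {i j m : ℕ} (hf : IsOctFace i j m)
    (e f g : OctE) (he : (e : Sym2 ℕ) = s(i, j)) (hfe : (f : Sym2 ℕ) = s(j, m))
    (hg : (g : Sym2 ℕ) = s(m, i)) :
    sgnLen lam i j • q e + sgnLen lam j m • q f + sgnLen lam m i • q g = 0 := by
  obtain ⟨hij, hmj, him⟩ := faceEdges hf
  have h1 := hq.2 e f i j m hf he (hfe.trans (Sym2.eq_swap))
  have h2 := hq.2 e g j i m (face_swap12 hf) (he.trans (Sym2.eq_swap)) hg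
  have h3 := hq.2 f g j m i (face_swap23 (face_swap12 hf)) hfe (hg.trans (Sym2.eq_swap))
  have n1 : (inner ℝ (q e) (q e) : ℝ) = 1 := by
    rw [real_inner_self_eq_norm_sq, hq.1 e]; norm_num
  have n2 : (inner ℝ (q f) (q f) : ℝ) = 1 := by
    rw [real_inner_self_eq_norm_sq, hq.1 f]; norm_num
  have n3 : (inner ℝ (q g) (q g) : ℝ) = 1 := by
    rw [real_inner_self_eq_norm_sq, hq.1 g]; norm_num
  rw [show sgnLen lam m j = - sgnLen lam j m from sgn_neg lam (edge_symm hmj),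
    show s(m,j) = s(j,m) from Sym2.eq_swap, show s(i,m) = s(m,i) from Sym2.eq_swap] at h1
  rw [show sgnLen lam j i = - sgnLen lam i j from sgn_neg lam hij,
    show s(j,i) = s(i,j) from Sym2.eq_swap] at h2
  rw [show sgnLen lam i m = - sgnLen lam m i from sgn_neg lam (edge_symm him),
    show s(i,m) = s(m,i) from Sym2.eq_swap, show s(j,i) = s(i,j) from Sym2.eq_swap] at h3
  have key : (inner ℝ (sgnLen lam i j • q e + sgnLen lam j m • q f + sgnLen lam m i • q g)
      (sgnLen lam i j • q e + sgnLen lam j m • q f + sgnLen lam m i • q g) : ℝ) = 0 := by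
    simp only [inner_add_left, inner_add_right, real_inner_smul_left, real_inner_smul_right]
    linear_combination (sgnLen lam i j)^2 * n1 + (sgnLen lam j m)^2 * n2 +
      (sgnLen lam m i)^2 * n3 - 2 * h1 - 2 * h2 - 2 * h3 +
      sgn_sq lam i j + sgn_sq lam j m + sgn_sq lam m i
      - (sgnLen lam i j * sgnLen lam j m) * real_inner_comm (q f) (q e)
      - (sgnLen lam i j * sgnLen lam m i) * real_inner_comm (q g) (q e)
      - (sgnLen lam j m * sgnLen lam m i) * real_inner_comm (q g) (q f)
  exact inner_self_eq_zero.mp key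

/-- Reduction from space to sphere: (a) the spherical realization induced by a compatible
realization is a compatible spherical realization; (b) `ρ ↦ q_ρ` induces a bijection
between compatible realizations modulo translations and compatible spherical
realizations. -/
theorem space_to_sphere
    (lam : Sym2 ℕ → ℝ)
    (hpos : ∀ i j, IsOctEdge i j → 0 < lam s(i, j))
    (htri : ∀ i j m, IsOctFace i j m → lam s(i, m) < lam s(i, j) + lam s(j, m)) :
    -- (a)
    (∀ ρ : ℕ → Pt, Compatible lam ρ →
      ∀ q : OctE → Pt, InducedSph lam ρ q → SphCompatible lam q) ∧
    -- (b) surjectivity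
    (∀ q : OctE → Pt, SphCompatible lam q →
      ∃ ρ : ℕ → Pt, Compatible lam ρ ∧ InducedSph lam ρ q) ∧
    -- (b) injectivity modulo translations
    (∀ ρ₁ ρ₂ : ℕ → Pt, Compatible lam ρ₁ → Compatible lam ρ₂ →
      ((∀ p ∈ dOrient,
          (lam s(p.1, p.2))⁻¹ • (ρ₁ p.1 - ρ₁ p.2) = (lam s(p.1, p.2))⁻¹ • (ρ₂ p.1 - ρ₂ p.2)) ↔
        ∃ t : Pt, ∀ i ∈ octV, ρ₂ i = ρ₁ i + t)) := by

  refine ⟨?_, ?_, ?_⟩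
  · -- part (a)
    intro ρ hρ q hq
    have key : ∀ (e : OctE) (i j : ℕ), IsOctEdge i j → (e : Sym2 ℕ) = s(i,j) →
        sgnLen lam i j • q e = ρ i - ρ j := by
      intro e i j hij he
      rcases orient_of_edge hij with ⟨h1, _⟩ | ⟨h1, h2⟩
      · rw [hq e (i,j) h1 he, sgnLen, if_pos h1, smul_smul,
          mul_inv_cancel₀ (ne_of_gt (hpos i j hij)), one_smul]
      · rw [hq e (j,i) h1 (he.trans Sym2.eq_swap), sgnLen, if_neg h2]
        rw [show s(j,i) = s(i,j) from Sym2.eq_swap, smul_smul,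
          show -lam s(i,j) * (lam s(i,j))⁻¹ = -1 by
            rw [neg_mul, mul_inv_cancel₀ (ne_of_gt (hpos i j hij))],
          neg_one_smul, neg_sub]
    constructor
    · intro e
      obtain ⟨i, j, hij, he⟩ := e.2
      have hk := key e i j hij he
      have h1 : ‖sgnLen lam i j • q e‖ = lam s(i,j) := by
        rw [hk, ← dist_eq_norm]; exact hρ i j hij
      rw [norm_smul, Real.norm_eq_abs, sgn_abs lam hij hpos] at h1
      exact mul_left_cancel₀ (ne_of_gt (hpos i j hij)) (by rw [h1, mul_one])
    · intro e f i j m hface he hf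
      obtain ⟨hij, hmj, him⟩ := faceEdges hface
      have k1 := key e i j hij he
      have k2 := key f m j hmj hf
      have expand : sgnLen lam i j * sgnLen lam m j * (inner ℝ (q e) (q f) : ℝ)
          = inner ℝ (ρ i - ρ j) (ρ m - ρ j) := by
        rw [← k1, ← k2, real_inner_smul_left, real_inner_smul_right]; ring
      rw [expand,
        real_inner_eq_norm_mul_self_add_norm_mul_self_sub_norm_sub_mul_self_div_two]
      have d1 : ‖ρ i - ρ j‖ = lam s(i,j) := by rw [← dist_eq_norm]; exact hρ i j hij
      have d2 : ‖ρ m - ρ j‖ = lam s(m,j) := by rw [← dist_eq_norm]; exact hρ m j hmj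
      have d3 : ‖ρ i - ρ j - (ρ m - ρ j)‖ = lam s(i,m) := by
        rw [show ρ i - ρ j - (ρ m - ρ j) = ρ i - ρ m by abel, ← dist_eq_norm]
        exact hρ i m him
      rw [d1, d2, d3]; ring
  · -- part (b) surjectivity
    intro q hq
    have h16 : IsOctEdge 1 6 := by decide
    have h13 : IsOctEdge 1 3 := by decide
    have h41 : IsOctEdge 4 1 := by decide
    have h51 : IsOctEdge 5 1 := by decide
    have h62 : IsOctEdge 6 2 := by decide
    have h63 : IsOctEdge 6 3 := by decide
    have h46 : IsOctEdge 4 6 := by decide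
    have h35 : IsOctEdge 3 5 := by decide
    have h32 : IsOctEdge 3 2 := by decide
    have h54 : IsOctEdge 5 4 := by decide
    have h24 : IsOctEdge 2 4 := by decide
    have h25 : IsOctEdge 2 5 := by decide
    obtain ⟨ρ, hρdef⟩ : ∃ ρ : ℕ → Pt, ρ = fun n =>
        if n = 1 then 0
        else if n = 6 then -(lam s(1,6) • q (mkE 1 6 h16))
        else if n = 3 then -(lam s(1,3) • q (mkE 1 3 h13))
        else if n = 4 then lam s(4,1) • q (mkE 4 1 h41)
        else if n = 5 then lam s(5,1) • q (mkE 5 1 h51)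
        else -(lam s(1,6) • q (mkE 1 6 h16)) - lam s(6,2) • q (mkE 6 2 h62) := ⟨_, rfl⟩
    have r1 : ρ 1 = 0 := by rw [hρdef]; norm_num
    have r6 : ρ 6 = -(lam s(1,6) • q (mkE 1 6 h16)) := by rw [hρdef]; norm_num
    have r3 : ρ 3 = -(lam s(1,3) • q (mkE 1 3 h13)) := by rw [hρdef]; norm_num
    have r4 : ρ 4 = lam s(4,1) • q (mkE 4 1 h41) := by rw [hρdef]; norm_num
    have r5 : ρ 5 = lam s(5,1) • q (mkE 5 1 h51) := by rw [hρdef]; norm_num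
    have r2 : ρ 2 = -(lam s(1,6) • q (mkE 1 6 h16)) - lam s(6,2) • q (mkE 6 2 h62) := by
      rw [hρdef]; norm_num
    -- tree edges
    have t16 : ρ 1 - ρ 6 = lam s(1,6) • q (mkE 1 6 h16) := by rw [r1, r6]; abel
    have t13 : ρ 1 - ρ 3 = lam s(1,3) • q (mkE 1 3 h13) := by rw [r1, r3]; abel
    have t41 : ρ 4 - ρ 1 = lam s(4,1) • q (mkE 4 1 h41) := by rw [r1, r4]; abel
    have t51 : ρ 5 - ρ 1 = lam s(5,1) • q (mkE 5 1 h51) := by rw [r1, r5]; abel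
    have t62 : ρ 6 - ρ 2 = lam s(6,2) • q (mkE 6 2 h62) := by rw [r6, r2]; abel
    -- derived edges via face closures
    have sgnP : ∀ i j : ℕ, (i,j) ∈ dOrient → sgnLen lam i j = lam s(i,j) := by
      intro i j h; rw [sgnLen, if_pos h]
    have sgnN : ∀ i j : ℕ, (i,j) ∉ dOrient → sgnLen lam i j = - lam s(i,j) := by
      intro i j h; rw [sgnLen, if_neg h]
    have t63 : ρ 6 - ρ 3 = lam s(6,3) • q (mkE 6 3 h63) := by
      have c := face_closure lam q hq (show IsOctFace 6 1 3 by decide)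
        (mkE 1 6 h16) (mkE 1 3 h13) (mkE 6 3 h63) Sym2.eq_swap rfl Sym2.eq_swap
      rw [sgnN 6 1 (by decide), sgnP 1 3 (by decide), sgnN 3 6 (by decide),
        show s(6,1) = s(1,6) from Sym2.eq_swap, show s(3,6) = s(6,3) from Sym2.eq_swap,
        neg_smul, neg_smul, ← t16, ← t13] at c
      have e1 : ρ 6 - ρ 3 - lam s(6,3) • q (mkE 6 3 h63) =
          -(ρ 1 - ρ 6) + (ρ 1 - ρ 3) + -(lam s(6,3) • q (mkE 6 3 h63)) := by abel
      exact sub_eq_zero.mp (e1.trans c)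
    have t46 : ρ 4 - ρ 6 = lam s(4,6) • q (mkE 4 6 h46) := by
      have c := face_closure lam q hq (show IsOctFace 4 1 6 by decide)
        (mkE 4 1 h41) (mkE 1 6 h16) (mkE 4 6 h46) rfl rfl Sym2.eq_swap
      rw [sgnP 4 1 (by decide), sgnP 1 6 (by decide), sgnN 6 4 (by decide),
        show s(6,4) = s(4,6) from Sym2.eq_swap, neg_smul, ← t41, ← t16] at c
      have e1 : ρ 4 - ρ 6 - lam s(4,6) • q (mkE 4 6 h46) =
          (ρ 4 - ρ 1) + (ρ 1 - ρ 6) + -(lam s(4,6) • q (mkE 4 6 h46)) := by abel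
      exact sub_eq_zero.mp (e1.trans c)
    have t35 : ρ 3 - ρ 5 = lam s(3,5) • q (mkE 3 5 h35) := by
      have c := face_closure lam q hq (show IsOctFace 3 1 5 by decide)
        (mkE 1 3 h13) (mkE 5 1 h51) (mkE 3 5 h35) Sym2.eq_swap Sym2.eq_swap Sym2.eq_swap
      rw [sgnN 3 1 (by decide), sgnN 1 5 (by decide), sgnN 5 3 (by decide),
        show s(3,1) = s(1,3) from Sym2.eq_swap, show s(1,5) = s(5,1) from Sym2.eq_swap,
        show s(5,3) = s(3,5) from Sym2.eq_swap,
        neg_smul, neg_smul, neg_smul, ← t13, ← t51] at c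
      have e1 : ρ 3 - ρ 5 - lam s(3,5) • q (mkE 3 5 h35) =
          -(ρ 1 - ρ 3) + -(ρ 5 - ρ 1) + -(lam s(3,5) • q (mkE 3 5 h35)) := by abel
      exact sub_eq_zero.mp (e1.trans c)
    have t54 : ρ 5 - ρ 4 = lam s(5,4) • q (mkE 5 4 h54) := by
      have c := face_closure lam q hq (show IsOctFace 5 1 4 by decide)
        (mkE 5 1 h51) (mkE 4 1 h41) (mkE 5 4 h54) rfl Sym2.eq_swap Sym2.eq_swap
      rw [sgnP 5 1 (by decide), sgnN 1 4 (by decide), sgnN 4 5 (by decide),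
        show s(1,4) = s(4,1) from Sym2.eq_swap, show s(4,5) = s(5,4) from Sym2.eq_swap,
        neg_smul, neg_smul, ← t51, ← t41] at c
      have e1 : ρ 5 - ρ 4 - lam s(5,4) • q (mkE 5 4 h54) =
          (ρ 5 - ρ 1) + -(ρ 4 - ρ 1) + -(lam s(5,4) • q (mkE 5 4 h54)) := by abel
      exact sub_eq_zero.mp (e1.trans c)
    have t32 : ρ 3 - ρ 2 = lam s(3,2) • q (mkE 3 2 h32) := by
      have c := face_closure lam q hq (show IsOctFace 3 6 2 by decide)
        (mkE 6 3 h63) (mkE 6 2 h62) (mkE 3 2 h32) Sym2.eq_swap rfl Sym2.eq_swap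
      rw [sgnN 3 6 (by decide), sgnP 6 2 (by decide), sgnN 2 3 (by decide),
        show s(3,6) = s(6,3) from Sym2.eq_swap, show s(2,3) = s(3,2) from Sym2.eq_swap,
        neg_smul, neg_smul, ← t63, ← t62] at c
      have e1 : ρ 3 - ρ 2 - lam s(3,2) • q (mkE 3 2 h32) =
          -(ρ 6 - ρ 3) + (ρ 6 - ρ 2) + -(lam s(3,2) • q (mkE 3 2 h32)) := by abel
      exact sub_eq_zero.mp (e1.trans c)
    have t24 : ρ 2 - ρ 4 = lam s(2,4) • q (mkE 2 4 h24) := by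
      have c := face_closure lam q hq (show IsOctFace 2 6 4 by decide)
        (mkE 6 2 h62) (mkE 4 6 h46) (mkE 2 4 h24) Sym2.eq_swap Sym2.eq_swap Sym2.eq_swap
      rw [sgnN 2 6 (by decide), sgnN 6 4 (by decide), sgnN 4 2 (by decide),
        show s(2,6) = s(6,2) from Sym2.eq_swap, show s(6,4) = s(4,6) from Sym2.eq_swap,
        show s(4,2) = s(2,4) from Sym2.eq_swap,
        neg_smul, neg_smul, neg_smul, ← t62, ← t46] at c
      have e1 : ρ 2 - ρ 4 - lam s(2,4) • q (mkE 2 4 h24) =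
          -(ρ 6 - ρ 2) + -(ρ 4 - ρ 6) + -(lam s(2,4) • q (mkE 2 4 h24)) := by abel
      exact sub_eq_zero.mp (e1.trans c)
    have t25 : ρ 2 - ρ 5 = lam s(2,5) • q (mkE 2 5 h25) := by
      have c := face_closure lam q hq (show IsOctFace 2 3 5 by decide)
        (mkE 3 2 h32) (mkE 3 5 h35) (mkE 2 5 h25) Sym2.eq_swap rfl Sym2.eq_swap
      rw [sgnN 2 3 (by decide), sgnP 3 5 (by decide), sgnN 5 2 (by decide),
        show s(2,3) = s(3,2) from Sym2.eq_swap, show s(5,2) = s(2,5) from Sym2.eq_swap,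
        neg_smul, neg_smul, ← t32, ← t35] at c
      have e1 : ρ 2 - ρ 5 - lam s(2,5) • q (mkE 2 5 h25) =
          -(ρ 3 - ρ 2) + (ρ 3 - ρ 5) + -(lam s(2,5) • q (mkE 2 5 h25)) := by abel
      exact sub_eq_zero.mp (e1.trans c)
    have H : ∀ p ∈ dOrient, ∀ e : OctE, (e : Sym2 ℕ) = s(p.1, p.2) →
        ρ p.1 - ρ p.2 = lam s(p.1, p.2) • q e := by
      intro p hp e he
      simp only [dOrient, List.mem_cons, List.not_mem_nil, or_false] at hp
      rcases hp with rfl|rfl|rfl|rfl|rfl|rfl|rfl|rfl|rfl|rfl|rfl|rfl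
      · rw [show e = mkE 1 6 h16 from Subtype.ext he]; exact t16
      · rw [show e = mkE 1 3 h13 from Subtype.ext he]; exact t13
      · rw [show e = mkE 4 1 h41 from Subtype.ext he]; exact t41
      · rw [show e = mkE 5 1 h51 from Subtype.ext he]; exact t51
      · rw [show e = mkE 6 3 h63 from Subtype.ext he]; exact t63
      · rw [show e = mkE 4 6 h46 from Subtype.ext he]; exact t46
      · rw [show e = mkE 6 2 h62 from Subtype.ext he]; exact t62
      · rw [show e = mkE 3 5 h35 from Subtype.ext he]; exact t35
      · rw [show e = mkE 3 2 h32 from Subtype.ext he]; exact t32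
      · rw [show e = mkE 5 4 h54 from Subtype.ext he]; exact t54
      · rw [show e = mkE 2 4 h24 from Subtype.ext he]; exact t24
      · rw [show e = mkE 2 5 h25 from Subtype.ext he]; exact t25
    refine ⟨ρ, ?_, ?_⟩
    · intro i j hij
      rcases orient_of_edge hij with ⟨h1, _⟩ | ⟨h1, _⟩
      · rw [dist_eq_norm, H (i,j) h1 (mkE i j hij) rfl, norm_smul, hq.1, mul_one,
          Real.norm_eq_abs, abs_of_pos (hpos i j hij)]
      · rw [dist_comm, dist_eq_norm, H (j,i) h1 (mkE i j hij) Sym2.eq_swap, norm_smul,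
          hq.1, mul_one, Real.norm_eq_abs, show s(j,i) = s(i,j) from Sym2.eq_swap,
          abs_of_pos (hpos i j hij)]
    · intro e p hp he
      rw [H p hp e he, smul_smul,
        inv_mul_cancel₀ (ne_of_gt (hpos p.1 p.2 (L_dir p hp))), one_smul]
  · -- part (c)
    intro ρ₁ ρ₂ h₁ h₂
    constructor
    · intro h
      have D : ∀ p ∈ dOrient, ρ₂ p.1 - ρ₁ p.1 = ρ₂ p.2 - ρ₁ p.2 := by
        intro p hp
        have hps := hpos p.1 p.2 (L_dir p hp)
        have hdiff : ρ₁ p.1 - ρ₁ p.2 = ρ₂ p.1 - ρ₂ p.2 :=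
          smul_right_injective Pt (inv_ne_zero (ne_of_gt hps)) (h p hp)
        have e1 : ρ₂ p.1 - ρ₁ p.1 - (ρ₂ p.2 - ρ₁ p.2) =
            (ρ₂ p.1 - ρ₂ p.2) - (ρ₁ p.1 - ρ₁ p.2) := by abel
        exact sub_eq_zero.mp (e1.trans (by rw [hdiff, sub_self]))
      refine ⟨ρ₂ 1 - ρ₁ 1, ?_⟩
      have d6 : ρ₂ 6 - ρ₁ 6 = ρ₂ 1 - ρ₁ 1 := (D (1,6) (by decide)).symm
      have d3 : ρ₂ 3 - ρ₁ 3 = ρ₂ 1 - ρ₁ 1 := (D (1,3) (by decide)).symm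
      have d4 : ρ₂ 4 - ρ₁ 4 = ρ₂ 1 - ρ₁ 1 := D (4,1) (by decide)
      have d5 : ρ₂ 5 - ρ₁ 5 = ρ₂ 1 - ρ₁ 1 := D (5,1) (by decide)
      have d2 : ρ₂ 2 - ρ₁ 2 = ρ₂ 1 - ρ₁ 1 := ((D (6,2) (by decide)).symm).trans d6
      intro i hi
      simp only [octV, Finset.mem_insert, Finset.mem_singleton] at hi
      rcases hi with rfl|rfl|rfl|rfl|rfl|rfl
      · abel
      · rw [← d2]; abel
      · rw [← d3]; abel
      · rw [← d4]; abel
      · rw [← d5]; abel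
      · rw [← d6]; abel
    · rintro ⟨t, ht⟩ p hp
      have hd := L_dir p hp
      rw [ht p.1 hd.1, ht p.2 hd.2.1, add_sub_add_right_eq_sub]
end
end

section
/- Let p1, p2, p3, p4 be pairwise distinct points of ℝ³ that are not all collinear, and let η1, η2, η3, η4 ∈ {1, −1}. If η1·dist(p1,p2) + η2·dist(p2,p3) + η3·dist(p3,p4) + η4·dist(p4,p1) = 0, then exactly two of η1, η2, η3, η4 equal 1 (and the other two equal −1). -/
noncomputable section

lemma collinear_of_dist_eq (p q r s : Pt)
    (h : dist p q = dist p r + dist r s + dist s q) :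
    Collinear ℝ ({p, q, r, s} : Set Pt) := by
  have h1 : dist r q ≤ dist r s + dist s q := dist_triangle r s q
  have h2 : dist p q ≤ dist p r + dist r q := dist_triangle p r q
  have e1 : dist p r + dist r q = dist p q := by linarith
  have e2 : dist r s + dist s q = dist r q := by linarith
  have w1 : Wbtw ℝ p r q := dist_add_dist_eq_iff.1 e1
  have w2 : Wbtw ℝ r s q := dist_add_dist_eq_iff.1 e2
  have hr : r ∈ affineSpan ℝ ({p, q} : Set Pt) := w1.mem_affineSpan
  have hc3 : Collinear ℝ (insert r ({p, q} : Set Pt)) :=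
    (collinear_insert_iff_of_mem_affineSpan hr).2 (collinear_pair ℝ p q)
  have hs : s ∈ affineSpan ℝ (insert r ({p, q} : Set Pt)) := by
    have hsub : affineSpan ℝ ({r, q} : Set Pt) ≤ affineSpan ℝ (insert r ({p, q} : Set Pt)) := by
      apply affineSpan_mono
      intro x hx
      rcases hx with rfl | hx
      · exact Set.mem_insert _ _
      · simp at hx; subst hx; simp
    exact hsub w2.mem_affineSpan
  have hc4 : Collinear ℝ (insert s (insert r ({p, q} : Set Pt))) :=
    (collinear_insert_iff_of_mem_affineSpan hs).2 hc3
  have hset : ({p, q, r, s} : Set Pt) = insert s (insert r ({p, q} : Set Pt)) := by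
    ext x; simp; tauto
  rw [hset]; exact hc4

set_option maxHeartbeats 1600000 in
/-- If four pairwise distinct, not all collinear points of `ℝ³` satisfy a vanishing
signed sum of consecutive distances with signs `±1`, then exactly two of the four
signs equal `1` (and hence the other two equal `-1`). -/
theorem signed_quadrilateral_relation
    (p₁ p₂ p₃ p₄ : Pt)
    (hdist : p₁ ≠ p₂ ∧ p₁ ≠ p₃ ∧ p₁ ≠ p₄ ∧ p₂ ≠ p₃ ∧ p₂ ≠ p₄ ∧ p₃ ≠ p₄)
    (hncol : ¬ Collinear ℝ ({p₁, p₂, p₃, p₄} : Set Pt))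
    (η : Fin 4 → ℝ)
    (hη : ∀ i, η i = 1 ∨ η i = -1)
    (heq : η 0 * dist p₁ p₂ + η 1 * dist p₂ p₃ + η 2 * dist p₃ p₄ + η 3 * dist p₄ p₁ = 0) :
    (Finset.univ.filter fun i => η i = 1).card = 2 ∧
      (Finset.univ.filter fun i => η i = -1).card = 2 := by
  obtain ⟨h12, h13, h14, h23, h24, h34⟩ := hdist
  have da : 0 < dist p₁ p₂ := dist_pos.2 h12
  have db : 0 < dist p₂ p₃ := dist_pos.2 h23
  have dc : 0 < dist p₃ p₄ := dist_pos.2 h34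
  have dd : 0 < dist p₄ p₁ := dist_pos.2 (Ne.symm h14)
  have K : ∀ (q r s t : Pt), ({q, r, s, t} : Set Pt) = {p₁, p₂, p₃, p₄} →
      dist q r = dist q s + dist s t + dist t r → False := by
    intro q r s t hset hd
    exact hncol (hset ▸ collinear_of_dist_eq q r s t hd)
  rcases hη 0 with h0 | h0 <;> rcases hη 1 with h1 | h1 <;>
    rcases hη 2 with h2 | h2 <;> rcases hη 3 with h3 | h3 <;>
    rw [h0, h1, h2, h3] at heq <;>
    first
    | exact absurd heq (by intro h; nlinarith [da, db, dc, dd])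
    | exact (K p₁ p₂ p₄ p₃ (by ext x; simp; tauto)
        (by rw [dist_comm p₁ p₄, dist_comm p₄ p₃, dist_comm p₃ p₂]; linarith)).elim
    | exact (K p₂ p₃ p₁ p₄ (by ext x; simp; tauto)
        (by rw [dist_comm p₂ p₁, dist_comm p₁ p₄, dist_comm p₄ p₃]; linarith)).elim
    | exact (K p₃ p₄ p₂ p₁ (by ext x; simp; tauto)
        (by rw [dist_comm p₃ p₂, dist_comm p₂ p₁, dist_comm p₁ p₄]; linarith)).elim
    | exact (K p₄ p₁ p₃ p₂ (by ext x; simp; tauto)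
        (by rw [dist_comm p₄ p₃, dist_comm p₃ p₂, dist_comm p₂ p₁]; linarith)).elim
    | (constructor <;>
        · rw [show (Finset.univ : Finset (Fin 4)) = {0, 1, 2, 3} from rfl]
          norm_num [Finset.filter_insert, Finset.filter_singleton, h0, h1, h2, h3] <;> decide)
end
end

section
/- Let v, w1, w2, w3, w4 ∈ ℝ³ be such that for each i (indices mod 4) the three points v, w_i, w_{i+1} are not collinear, and let α_i = ∠ w_i v w_{i+1}. Assume the rhomboid condition: either (α1 = α3 and α2 = α4) or (α1 + α3 = π and α2 + α4 = π), and additionally cos²α1 ≠ cos²α2 (excluding lozenges). If for some index i the four points v, w_{i−1}, w_i, w_{i+1} are coplanar (equivalently, the dihedral angle between the two triangular faces meeting along the segment v w_i is 0 or π), then all five points v, w1, w2, w3, w4 are coplanar. Conversely, if the five points are coplanar, then for every index i the four points v, w_{i−1}, w_i, w_{i+1} are coplanar. -/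
open EuclideanGeometry

noncomputable section

open RealInnerProductSpace

private lemma ncol_aux {v x y : Pt} {a b : ℝ} (ha : a ≠ 0)
    (hab : a • (x - v) + b • (y - v) = 0) : Collinear ℝ ({v, x, y} : Set Pt) := by
  have h1 : a • (x - v) = (-b) • (y - v) := by
    rw [neg_smul]
    exact eq_neg_of_add_eq_zero_left hab
  have hx : x - v = (a⁻¹ * (-b)) • (y - v) := by
    calc x - v = a⁻¹ • (a • (x - v)) := (inv_smul_smul₀ ha _).symm
      _ = a⁻¹ • ((-b) • (y - v)) := by rw [h1]
      _ = (a⁻¹ * (-b)) • (y - v) := by rw [smul_smul]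
  rw [collinear_iff_of_mem (Set.mem_insert v _)]
  refine ⟨y - v, fun p hp => ?_⟩
  simp only [Set.mem_insert_iff, Set.mem_singleton_iff] at hp
  rcases hp with rfl | rfl | rfl
  · exact ⟨0, by simp⟩
  · exact ⟨a⁻¹ * (-b), by rw [eq_vadd_iff_vsub_eq, vsub_eq_sub]; exact hx⟩
  · exact ⟨1, by rw [eq_vadd_iff_vsub_eq, vsub_eq_sub, one_smul]⟩

private lemma ncol_indep {v x y : Pt} (h : ¬ Collinear ℝ ({v, x, y} : Set Pt)) :
    ∀ a b : ℝ, a • (x - v) + b • (y - v) = 0 → a = 0 ∧ b = 0 := by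
  intro a b hab
  by_contra hc
  rw [not_and_or] at hc
  apply h
  rcases hc with ha | hb
  · exact ncol_aux ha hab
  · have : ({v, x, y} : Set Pt) = {v, y, x} := by
      ext p; simp only [Set.mem_insert_iff, Set.mem_singleton_iff]; tauto
    rw [this]
    exact ncol_aux hb (by rw [add_comm] at hab; exact hab)

private lemma ncol_ne {v x y : Pt} (h : ¬ Collinear ℝ ({v, x, y} : Set Pt)) :
    x - v ≠ 0 ∧ y - v ≠ 0 := by
  constructor
  · intro h0
    have := (ncol_indep h 1 0 (by simp [h0])).1
    norm_num at this
  · intro h0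
    have := (ncol_indep h 0 1 (by simp [h0])).2
    norm_num at this

private lemma coplanar_dep {v a b c : Pt} (h : Coplanar ℝ ({v, a, b, c} : Set Pt)) :
    ∃ g0 g1 g2 : ℝ, g0 • (a - v) + g1 • (b - v) + g2 • (c - v) = 0 ∧
      (g0 ≠ 0 ∨ g1 ≠ 0 ∨ g2 ≠ 0) := by
  by_contra hc
  push_neg at hc
  have hli : LinearIndependent ℝ ![a - v, b - v, c - v] := by
    rw [Fintype.linearIndependent_iff]
    intro g hg
    have h0 := hc (g 0) (g 1) (g 2) (by simpa [Fin.sum_univ_three] using hg)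
    intro i; fin_cases i <;> simp [h0.1, h0.2.1, h0.2.2]
  have hsp : Submodule.span ℝ (Set.range ![a - v, b - v, c - v]) ≤
      vectorSpan ℝ ({v, a, b, c} : Set Pt) := by
    rw [Submodule.span_le]
    intro z hz
    simp only [Matrix.range_cons, Matrix.range_empty, Set.union_empty, Set.union_singleton,
      Set.mem_insert_iff, Set.mem_singleton_iff] at hz
    have hv : v ∈ ({v, a, b, c} : Set Pt) := by simp
    have key : ∀ p ∈ ({v, a, b, c} : Set Pt), p - v ∈ vectorSpan ℝ ({v, a, b, c} : Set Pt) := by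
      intro p hp
      have h' := vsub_mem_vectorSpan ℝ hp hv
      rwa [vsub_eq_sub] at h'
    rcases hz with rfl | rfl | rfl
    · exact key _ (by simp)
    · exact key _ (by simp)
    · exact key _ (by simp)
  have h3 : (3 : ℕ) ≤ Module.finrank ℝ (vectorSpan ℝ ({v, a, b, c} : Set Pt)) := by
    have := finrank_span_eq_card hli
    simp only [Fintype.card_fin] at this
    calc (3:ℕ) = Module.finrank ℝ (Submodule.span ℝ (Set.range ![a - v, b - v, c - v])) :=
          this.symm
      _ ≤ _ := Submodule.finrank_mono hsp
  have h2 := h.finrank_le_two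
  omega

set_option maxHeartbeats 1000000 in
open RealInnerProductSpace in
private lemma core (u0 u1 u2 u3 : Pt)
    (h0 : ‖u0‖ = 1) (h1 : ‖u1‖ = 1) (h2 : ‖u2‖ = 1) (h3 : ‖u3‖ = 1)
    (hind : ∀ a b : ℝ, a • u0 + b • u1 = 0 → a = 0 ∧ b = 0)
    (hdep : ∃ g0 g1 g2 : ℝ, g0 • u0 + g1 • u1 + g2 • u2 = 0 ∧ (g0 ≠ 0 ∨ g1 ≠ 0 ∨ g2 ≠ 0))
    (hprod : ⟪u2,u3⟫ * ⟪u3,u0⟫ = ⟪u0,u1⟫ * ⟪u1,u2⟫)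
    (hsq : ⟪u2,u3⟫^2 + ⟪u3,u0⟫^2 = ⟪u0,u1⟫^2 + ⟪u1,u2⟫^2)
    (hne : ⟪u0,u1⟫^2 ≠ ⟪u1,u2⟫^2) :
    (∃ x y : ℝ, u1 = x • u0 + y • u2) ∧ (∃ x y : ℝ, u3 = x • u0 + y • u2) := by
  have i00 : ⟪u0,u0⟫ = 1 := by
    rw [real_inner_self_eq_norm_mul_norm, h0]; norm_num
  have i11 : ⟪u1,u1⟫ = 1 := by
    rw [real_inner_self_eq_norm_mul_norm, h1]; norm_num
  have i22 : ⟪u2,u2⟫ = 1 := by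
    rw [real_inner_self_eq_norm_mul_norm, h2]; norm_num
  have i33 : ⟪u3,u3⟫ = 1 := by
    rw [real_inner_self_eq_norm_mul_norm, h3]; norm_num
  obtain ⟨g0, g1, g2, hg, hgne⟩ := hdep
  have hg2 : g2 ≠ 0 := by
    intro h'
    rw [h', zero_smul, add_zero] at hg
    obtain ⟨e0, e1⟩ := hind _ _ hg
    tauto
  obtain ⟨a, ha⟩ : ∃ r : ℝ, g2⁻¹ * (-g0) = r := ⟨_, rfl⟩
  obtain ⟨b, hbd⟩ : ∃ r : ℝ, g2⁻¹ * (-g1) = r := ⟨_, rfl⟩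
  have hu2 : u2 = a • u0 + b • u1 := by
    rw [← ha, ← hbd]
    have h' : g2 • u2 = (-g0) • u0 + (-g1) • u1 := by
      calc g2 • u2 = g0 • u0 + g1 • u1 + g2 • u2 - g0 • u0 - g1 • u1 := by module
        _ = 0 - g0 • u0 - g1 • u1 := by rw [hg]
        _ = (-g0) • u0 + (-g1) • u1 := by module
    calc u2 = g2⁻¹ • (g2 • u2) := (inv_smul_smul₀ hg2 _).symm
      _ = g2⁻¹ • ((-g0) • u0 + (-g1) • u1) := by rw [h']
      _ = (g2⁻¹ * (-g0)) • u0 + (g2⁻¹ * (-g1)) • u1 := by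
          rw [smul_add, smul_smul, smul_smul]
  obtain ⟨k, hk⟩ : ∃ r : ℝ, ⟪u0,u1⟫ = r := ⟨_, rfl⟩
  obtain ⟨c1, hc1⟩ : ∃ r : ℝ, ⟪u1,u2⟫ = r := ⟨_, rfl⟩
  obtain ⟨t, ht0⟩ : ∃ r : ℝ, ⟪u0,u2⟫ = r := ⟨_, rfl⟩
  obtain ⟨d2, hd2⟩ : ∃ r : ℝ, ⟪u2,u3⟫ = r := ⟨_, rfl⟩
  obtain ⟨d3, hd3⟩ : ∃ r : ℝ, ⟪u3,u0⟫ = r := ⟨_, rfl⟩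
  simp only [hk, hc1, hd2, hd3] at hprod hsq hne
  have c10 : ⟪u1,u0⟫ = k := by rw [real_inner_comm, hk]
  have c20 : ⟪u2,u0⟫ = t := by rw [real_inner_comm, ht0]
  have c21 : ⟪u2,u1⟫ = c1 := by rw [real_inner_comm, hc1]
  have c32 : ⟪u3,u2⟫ = d2 := by rw [real_inner_comm, hd2]
  have c03 : ⟪u0,u3⟫ = d3 := by rw [real_inner_comm, hd3]
  have ht : t = a + b * k := by
    rw [← ht0, hu2]
    simp only [inner_add_right, real_inner_smul_right, i00, hk]
    ring
  have hcc : c1 = a * k + b := by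
    rw [← hc1, hu2]
    simp only [inner_add_right, real_inner_smul_right, i11, c10]
    ring
  have hnorm : a^2 + b^2 + 2*a*b*k = 1 := by
    have h' := i22
    conv_lhs at h' => rw [hu2]
    simp only [inner_add_left, inner_add_right, real_inner_smul_left, real_inner_smul_right,
      i00, i11, c10, hk] at h'
    linear_combination h'
  have hG : 1 + 2*k*c1*t - k^2 - c1^2 - t^2 = 0 := by
    rw [ht, hcc]
    linear_combination (k^2 - 1) * hnorm
  have ht2 : t^2 ≠ 1 := by
    intro h'
    apply hne
    have hz : (k*t - c1)^2 = 0 := by linear_combination (k^2 - 1) * h' - hG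
    have hkt : k*t = c1 := by
      have h0' : k*t - c1 = 0 := by
        have := pow_eq_zero_iff (n := 2) (by norm_num) |>.mp hz
        exact this
      linarith
    calc k^2 = k^2 * t^2 := by rw [h']; ring
      _ = c1^2 := by rw [← hkt]; ring
  have hD : (1 : ℝ) - t^2 ≠ 0 := fun h' => ht2 (by linarith)
  have hG' : 1 + 2*t*d2*d3 - t^2 - d2^2 - d3^2 = 0 := by
    linear_combination hG + 2*t*hprod - hsq
  constructor
  · -- u1 ∈ span {u0, u2}
    have hbne : b ≠ 0 := by
      intro h'
      apply ht2
      rw [h', zero_smul, add_zero] at hu2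
      have hta : t = a := by rw [← ht0, hu2, real_inner_smul_right, i00]; ring
      have h1' : a^2 = 1 := by linear_combination hnorm + (-b - 2*a*k) * h'
      rw [hta]; exact h1'
    refine ⟨-(a/b), b⁻¹, ?_⟩
    rw [hu2, smul_add, smul_smul, smul_smul]
    have e1 : b⁻¹ * b = 1 := inv_mul_cancel₀ hbne
    have e2 : -(a/b) + b⁻¹ * a = 0 := by field_simp; ring
    match_scalars
    · field_simp
    · field_simp; ring
  · -- u3 ∈ span {u0, u2}
    have hvec : ⟪(1 - t^2) • u3 - ((d3 - d2*t) • u0 + (d2 - d3*t) • u2),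
        (1 - t^2) • u3 - ((d3 - d2*t) • u0 + (d2 - d3*t) • u2)⟫ = 0 := by
      simp only [inner_sub_left, inner_sub_right, inner_add_left, inner_add_right,
        real_inner_smul_left, real_inner_smul_right, i00, i22, i33, ht0, c20, c32, c03,
        hd2, hd3]
      linear_combination (1 - t^2) * hG'
    have hzero : (1 - t^2) • u3 = (d3 - d2*t) • u0 + (d2 - d3*t) • u2 := by
      have h' := hvec
      rw [inner_self_eq_zero, sub_eq_zero] at h'
      exact h'
    refine ⟨(1 - t^2)⁻¹ * (d3 - d2*t), (1 - t^2)⁻¹ * (d2 - d3*t), ?_⟩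
    calc u3 = (1 - t^2)⁻¹ • ((1 - t^2) • u3) := (inv_smul_smul₀ hD _).symm
      _ = (1 - t^2)⁻¹ • ((d3 - d2*t) • u0 + (d2 - d3*t) • u2) := by rw [hzero]
      _ = ((1 - t^2)⁻¹ * (d3 - d2*t)) • u0 + ((1 - t^2)⁻¹ * (d2 - d3*t)) • u2 := by
          rw [smul_add, smul_smul, smul_smul]


/-- Flatness of a rhomboid pyramid: for a pyramid with apex `v` and base `w 0, …, w 3`
(indices mod 4) whose opposite apex angles are pairwise equal or pairwise
supplementary, and which is not a lozenge (`cos² α₁ ≠ cos² α₂`), if the four points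
`v, w (i−1), w i, w (i+1)` are coplanar for some `i`, then all five points are
coplanar; conversely, if all five points are coplanar then the four points
`v, w (i−1), w i, w (i+1)` are coplanar for every `i`. -/
theorem rhomboid_flat
    (v : Pt) (w : ZMod 4 → Pt)
    (hncol : ∀ i : ZMod 4, ¬ Collinear ℝ ({v, w i, w (i + 1)} : Set Pt))
    (α : ZMod 4 → ℝ)
    (hα : ∀ i : ZMod 4, α i = ∠ (w i) v (w (i + 1)))
    (hrhomboid : (α 0 = α 2 ∧ α 1 = α 3) ∨ (α 0 + α 2 = Real.pi ∧ α 1 + α 3 = Real.pi))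
    (hnotloz : Real.cos (α 0) ^ 2 ≠ Real.cos (α 1) ^ 2) :
    ((∃ i : ZMod 4, Coplanar ℝ ({v, w (i - 1), w i, w (i + 1)} : Set Pt)) →
        Coplanar ℝ ({v, w 0, w 1, w 2, w 3} : Set Pt)) ∧
    (Coplanar ℝ ({v, w 0, w 1, w 2, w 3} : Set Pt) →
        ∀ i : ZMod 4, Coplanar ℝ ({v, w (i - 1), w i, w (i + 1)} : Set Pt)) := by
  have h4 : ∀ j : ZMod 4, j = 0 ∨ j = 1 ∨ j = 2 ∨ j = 3 := by decide
  have hrel : ∀ i j : ZMod 4, j = i - 1 ∨ j = i ∨ j = i + 1 ∨ j = i + 2 := by decide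
  have z1 : ∀ i : ZMod 4, i - 1 + 1 = i := by decide
  have z2 : ∀ i : ZMod 4, i + 1 + 1 = i + 2 := by decide
  have z3 : ∀ i : ZMod 4, i + 2 + 1 = i - 1 := by decide
  have z4 : ∀ i : ZMod 4, i - 1 + 2 = i + 1 := by decide
  have hne0 : ∀ j : ZMod 4, w j - v ≠ 0 := fun j => (ncol_ne (hncol j)).1
  have hnorm0 : ∀ j : ZMod 4, ‖w j - v‖ ≠ 0 := fun j => norm_ne_zero_iff.mpr (hne0 j)
  obtain ⟨u, hu⟩ : ∃ u : ZMod 4 → Pt, ∀ j, u j = ‖w j - v‖⁻¹ • (w j - v) :=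
    ⟨_, fun j => rfl⟩
  have hun : ∀ j, ‖u j‖ = 1 := by
    intro j
    rw [hu j, norm_smul, norm_inv, norm_norm, inv_mul_cancel₀ (hnorm0 j)]
  have hue : ∀ j, w j - v = ‖w j - v‖ • u j := by
    intro j; rw [hu j, smul_smul, mul_inv_cancel₀ (hnorm0 j), one_smul]
  have hcos : ∀ j : ZMod 4, Real.cos (α j) = ⟪u j, u (j + 1)⟫ := by
    intro j
    rw [hα j]
    have hang : ∠ (w j) v (w (j+1)) = InnerProductGeometry.angle (w j -ᵥ v) (w (j+1) -ᵥ v) := rfl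
    rw [hang, InnerProductGeometry.cos_angle, vsub_eq_sub, vsub_eq_sub,
      hu j, hu (j+1), real_inner_smul_left, real_inner_smul_right]
    field_simp
  -- rhomboid consequences
  have hper : (∀ j : ZMod 4, Real.cos (α (j+2)) = Real.cos (α j)) ∨
      (∀ j : ZMod 4, Real.cos (α (j+2)) = - Real.cos (α j)) := by
    rcases hrhomboid with ⟨h02, h13⟩ | ⟨h02, h13⟩
    · left
      intro j
      rcases h4 j with rfl | rfl | rfl | rfl
      · have e : (0:ZMod 4) + 2 = 2 := by decide
        rw [e, h02]
      · have e : (1:ZMod 4) + 2 = 3 := by decide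
        rw [e, h13]
      · have e : (2:ZMod 4) + 2 = 0 := by decide
        rw [e, h02]
      · have e : (3:ZMod 4) + 2 = 1 := by decide
        rw [e, h13]
    · right
      intro j
      have c02 : Real.cos (α 2) = - Real.cos (α 0) := by
        have : α 2 = Real.pi - α 0 := by linarith
        rw [this, Real.cos_pi_sub]
      have c13 : Real.cos (α 3) = - Real.cos (α 1) := by
        have : α 3 = Real.pi - α 1 := by linarith
        rw [this, Real.cos_pi_sub]
      rcases h4 j with rfl | rfl | rfl | rfl
      · have e : (0:ZMod 4) + 2 = 2 := by decide
        rw [e, c02]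
      · have e : (1:ZMod 4) + 2 = 3 := by decide
        rw [e, c13]
      · have e : (2:ZMod 4) + 2 = 0 := by decide
        rw [e, c02]; ring
      · have e : (3:ZMod 4) + 2 = 1 := by decide
        rw [e, c13]; ring
  have hper2 : ∀ j : ZMod 4, Real.cos (α (j+2))^2 = Real.cos (α j)^2 := by
    rcases hper with h | h <;> intro j <;> rw [h j] <;> ring
  have key1 : ∀ i : ZMod 4, Real.cos (α (i+1)) * Real.cos (α (i+2)) =
      Real.cos (α (i-1)) * Real.cos (α i) := by
    intro i
    have e1 : i + 1 = (i - 1) + 2 := by rw [z4]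
    rcases hper with h | h
    · rw [e1, h (i-1), h i]
    · rw [e1, h (i-1), h i]; ring
  have key2 : ∀ i : ZMod 4, Real.cos (α (i+1))^2 + Real.cos (α (i+2))^2 =
      Real.cos (α (i-1))^2 + Real.cos (α i)^2 := by
    intro i
    have e1 : i + 1 = (i - 1) + 2 := by rw [z4]
    rw [e1, hper2 (i-1), hper2 i]
  have key3 : ∀ i : ZMod 4, Real.cos (α (i-1))^2 ≠ Real.cos (α i)^2 := by
    intro i
    rcases h4 i with rfl | rfl | rfl | rfl
    · have e : (0:ZMod 4) - 1 = 1 + 2 := by decide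
      rw [e, hper2 1]
      exact fun h => hnotloz h.symm
    · have e : (1:ZMod 4) - 1 = 0 := by decide
      rw [e]; exact hnotloz
    · have e : (2:ZMod 4) - 1 = 1 := by decide
      have e2 : (2:ZMod 4) = 0 + 2 := by decide
      rw [e, e2, hper2 0]
      exact fun h => hnotloz h.symm
    · have e : (3:ZMod 4) - 1 = 0 + 2 := by decide
      have e2 : (3:ZMod 4) = 1 + 2 := by decide
      rw [e, e2, hper2 0, hper2 1]
      exact hnotloz
  constructor
  · rintro ⟨i, hcop⟩
    obtain ⟨g0, g1, g2, hg, hgne⟩ := coplanar_dep hcop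
    have hg' : (g0 * ‖w (i-1) - v‖) • u (i-1) + (g1 * ‖w i - v‖) • u i +
        (g2 * ‖w (i+1) - v‖) • u (i+1) = 0 := by
      rw [mul_smul, mul_smul, mul_smul, ← hue, ← hue, ← hue]
      exact hg
    have hgne' : g0 * ‖w (i-1) - v‖ ≠ 0 ∨ g1 * ‖w i - v‖ ≠ 0 ∨ g2 * ‖w (i+1) - v‖ ≠ 0 := by
      rcases hgne with h | h | h
      · exact Or.inl (mul_ne_zero h (hnorm0 _))
      · exact Or.inr (Or.inl (mul_ne_zero h (hnorm0 _)))
      · exact Or.inr (Or.inr (mul_ne_zero h (hnorm0 _)))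
    have hindu : ∀ a b : ℝ, a • u (i-1) + b • u i = 0 → a = 0 ∧ b = 0 := by
      intro a b hab
      have hnc := hncol (i-1)
      rw [z1 i] at hnc
      have h' := ncol_indep hnc (a * ‖w (i-1) - v‖⁻¹) (b * ‖w i - v‖⁻¹) (by
        rw [mul_smul, mul_smul, ← hu, ← hu]; exact hab)
      constructor
      · have := h'.1
        rcases mul_eq_zero.mp this with h'' | h''
        · exact h''
        · exact absurd h'' (inv_ne_zero (hnorm0 _))
      · have := h'.2
        rcases mul_eq_zero.mp this with h'' | h''
        · exact h''
        · exact absurd h'' (inv_ne_zero (hnorm0 _))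
    have a1 : ⟪u (i+1), u (i+2)⟫ = Real.cos (α (i+1)) := by rw [hcos (i+1), z2]
    have a2 : ⟪u (i+2), u (i-1)⟫ = Real.cos (α (i+2)) := by rw [hcos (i+2), z3]
    have a3 : ⟪u (i-1), u i⟫ = Real.cos (α (i-1)) := by rw [hcos (i-1), z1]
    have a4 : ⟪u i, u (i+1)⟫ = Real.cos (α i) := by rw [hcos i]
    have hcore := core (u (i-1)) (u i) (u (i+1)) (u (i+2)) (hun _) (hun _) (hun _) (hun _)
      hindu ⟨_, _, _, hg', hgne'⟩
      (by rw [a1, a2, a3, a4]; exact key1 i)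
      (by rw [a1, a2, a3, a4]; exact key2 i)
      (by rw [a3, a4]; exact key3 i)
    obtain ⟨⟨x1, y1, hu1⟩, ⟨x3, y3, hu3⟩⟩ := hcore
    have hvmem : v ∈ ({v, w 0, w 1, w 2, w 3} : Set Pt) := by simp
    have hM2 : Module.finrank ℝ (vectorSpan ℝ ({v, w (i-1), w (i+1)} : Set Pt)) ≤ 2 :=
      (coplanar_triple ℝ v (w (i-1)) (w (i+1))).finrank_le_two
    have m1 : w (i-1) - v ∈ vectorSpan ℝ ({v, w (i-1), w (i+1)} : Set Pt) := by
      have := vsub_mem_vectorSpan ℝ (show w (i-1) ∈ ({v, w (i-1), w (i+1)} : Set Pt) by simp)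
        (show v ∈ ({v, w (i-1), w (i+1)} : Set Pt) by simp)
      rwa [vsub_eq_sub] at this
    have m2 : w (i+1) - v ∈ vectorSpan ℝ ({v, w (i-1), w (i+1)} : Set Pt) := by
      have := vsub_mem_vectorSpan ℝ (show w (i+1) ∈ ({v, w (i-1), w (i+1)} : Set Pt) by simp)
        (show v ∈ ({v, w (i-1), w (i+1)} : Set Pt) by simp)
      rwa [vsub_eq_sub] at this
    have mu1 : u (i-1) ∈ vectorSpan ℝ ({v, w (i-1), w (i+1)} : Set Pt) := by
      rw [hu]; exact Submodule.smul_mem _ _ m1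
    have mu2 : u (i+1) ∈ vectorSpan ℝ ({v, w (i-1), w (i+1)} : Set Pt) := by
      rw [hu]; exact Submodule.smul_mem _ _ m2
    have hmem : ∀ j : ZMod 4, w j - v ∈ vectorSpan ℝ ({v, w (i-1), w (i+1)} : Set Pt) := by
      intro j
      rcases hrel i j with h | h | h | h <;> rw [h]
      · exact m1
      · rw [hue i, hu1]
        exact Submodule.smul_mem _ _ (Submodule.add_mem _
          (Submodule.smul_mem _ _ mu1) (Submodule.smul_mem _ _ mu2))
      · exact m2
      · rw [hue (i+2), hu3]
        exact Submodule.smul_mem _ _ (Submodule.add_mem _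
          (Submodule.smul_mem _ _ mu1) (Submodule.smul_mem _ _ mu2))
    rw [coplanar_iff_finrank_le_two]
    have hle : vectorSpan ℝ ({v, w 0, w 1, w 2, w 3} : Set Pt) ≤
        vectorSpan ℝ ({v, w (i-1), w (i+1)} : Set Pt) := by
      rw [vectorSpan_eq_span_vsub_set_right ℝ hvmem, Submodule.span_le]
      rintro z ⟨p, hp, rfl⟩
      simp only [Set.mem_insert_iff, Set.mem_singleton_iff] at hp
      rcases hp with rfl | rfl | rfl | rfl | rfl
      · simp only [vsub_self]
        exact Submodule.zero_mem _
      · simpa [vsub_eq_sub] using hmem 0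
      · simpa [vsub_eq_sub] using hmem 1
      · simpa [vsub_eq_sub] using hmem 2
      · simpa [vsub_eq_sub] using hmem 3
    exact le_trans (Submodule.finrank_mono hle) hM2
  · intro h5 i
    refine Coplanar.subset ?_ h5
    intro p hp
    have hw : ∀ j : ZMod 4, w j ∈ ({v, w 0, w 1, w 2, w 3} : Set Pt) := by
      intro j
      rcases h4 j with rfl | rfl | rfl | rfl <;> simp
    simp only [Set.mem_insert_iff, Set.mem_singleton_iff] at hp
    rcases hp with rfl | rfl | rfl | rfl
    · simp
    · exact hw _
    · exact hw _
    · exact hw _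
end
end

section
/- Let a, b, c, d ∈ ℝ³ be coplanar points such that a, b, c are not collinear and a ≠ c. If dist(a,b) = dist(c,d) and dist(b,c) = dist(a,d), then either b − a = c − d (the quadrilateral a b c d is a parallelogram), or the reflection of ℝ³ across the perpendicular bisector plane of the segment from a to c maps b to d (and swaps a with c), i.e. the quadrilateral a b c d is an antiparallelogram. -/
open EuclideanGeometry

noncomputable section

lemma refl_formula (a c : Pt) (hac : a ≠ c) (x : Pt)
    [Nonempty (AffineSubspace.perpBisector a c)] :
    (EuclideanGeometry.reflection (AffineSubspace.perpBisector a c) x : Pt)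
      = x - ((2 * (inner ℝ (x - midpoint ℝ a c) (c - a) : ℝ) /
          (inner ℝ (c - a) (c - a) : ℝ)) • (c - a)) := by
  set s := AffineSubspace.perpBisector a c with hs
  set v : Pt := c - a with hv
  have hv0 : v ≠ 0 := sub_ne_zero.mpr hac.symm
  have hvv : (inner ℝ v v : ℝ) ≠ 0 := (inner_self_ne_zero (𝕜 := ℝ)).mpr hv0
  set k : ℝ := (inner ℝ (x - midpoint ℝ a c) v : ℝ) / (inner ℝ v v : ℝ) with hk
  set p : Pt := x - k • v with hp
  have hps : p ∈ s := by
    rw [hs, AffineSubspace.mem_perpBisector_iff_inner_eq_zero]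
    have : p -ᵥ midpoint ℝ a c = (x - midpoint ℝ a c) - k • v := by
      simp [hp, vsub_eq_sub]; abel
    rw [this]
    have h1 : c -ᵥ a = v := by simp [hv, vsub_eq_sub]
    rw [h1, inner_sub_left, real_inner_smul_left, hk, div_mul_cancel₀ _ hvv, sub_self]
  have hdir : s.directionᗮ = ℝ ∙ v := by
    rw [hs, AffineSubspace.direction_perpBisector, Submodule.orthogonal_orthogonal]
    rfl
  have hmk : p ∈ AffineSubspace.mk' x s.directionᗮ := by
    rw [AffineSubspace.mem_mk', hdir]
    have : p -ᵥ x = (-k) • v := by simp [hp, vsub_eq_sub, neg_smul]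
    rw [this]
    exact Submodule.smul_mem _ _ (Submodule.mem_span_singleton_self v)
  have hproj : (orthogonalProjection s x : Pt) = p := by
    have h := EuclideanGeometry.inter_eq_singleton_orthogonalProjection (s := s) x
    have : p ∈ ({(orthogonalProjection s x : Pt)} : Set Pt) := by
      rw [← h]; exact ⟨hps, hmk⟩
    simpa using this.symm
  rw [EuclideanGeometry.reflection_apply', hproj]
  have h2k : (2 * (inner ℝ (x - midpoint ℝ a c) v : ℝ) / (inner ℝ v v : ℝ)) = 2 * k := by
    rw [hk]; ring
  rw [h2k, hp]
  simp only [vsub_eq_sub, vadd_eq_add, two_mul, add_smul]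
  abel

/-- A planar quadrilateral `a b c d` whose opposite sides have equal lengths and whose
vertices `a, b, c` are not collinear is either a parallelogram (`b − a = c − d`) or an
antiparallelogram: the reflection of `ℝ³` across the perpendicular bisector plane of
the segment from `a` to `c` (which swaps `a` and `c`) maps `b` to `d`. -/
theorem parallelogram_or_antiparallelogram
    (a b c d : Pt)
    (hcop : Coplanar ℝ ({a, b, c, d} : Set Pt))
    (hncol : ¬ Collinear ℝ ({a, b, c} : Set Pt))
    (hac : a ≠ c)
    (h₁ : dist a b = dist c d)
    (h₂ : dist b c = dist a d) :
    b - a = c - d ∨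
      (haveI : Nonempty (AffineSubspace.perpBisector a c) :=
        ⟨⟨midpoint ℝ a c, AffineSubspace.midpoint_mem_perpBisector a c⟩⟩
       EuclideanGeometry.reflection (AffineSubspace.perpBisector a c) b = d) := by
  haveI : Nonempty (AffineSubspace.perpBisector a c) :=
    ⟨⟨midpoint ℝ a c, AffineSubspace.midpoint_mem_perpBisector a c⟩⟩
  -- d - a lies in the span of b - a and c - a
  have hsub : ({a, b, c} : Set Pt) ⊆ ({a, b, c, d} : Set Pt) := by
    intro x hx; simp only [Set.mem_insert_iff, Set.mem_singleton_iff] at hx ⊢; tauto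
  have hle : vectorSpan ℝ ({a, b, c} : Set Pt) ≤ vectorSpan ℝ ({a, b, c, d} : Set Pt) :=
    vectorSpan_mono ℝ hsub
  have hfin1 : 2 ≤ Module.finrank ℝ (vectorSpan ℝ ({a, b, c} : Set Pt)) := by
    by_contra h
    push_neg at h
    exact hncol (collinear_iff_finrank_le_one.mpr (by omega))
  have hfin2 : Module.finrank ℝ (vectorSpan ℝ ({a, b, c, d} : Set Pt)) ≤ 2 :=
    hcop.finrank_le_two
  have heq : vectorSpan ℝ ({a, b, c} : Set Pt) = vectorSpan ℝ ({a, b, c, d} : Set Pt) :=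
    Submodule.eq_of_le_of_finrank_le hle (le_trans hfin2 hfin1)
  have hdmem : d - a ∈ vectorSpan ℝ ({a, b, c} : Set Pt) := by
    rw [heq]
    have hmem := vsub_mem_vectorSpan ℝ (show d ∈ ({a, b, c, d} : Set Pt) by simp)
      (show a ∈ ({a, b, c, d} : Set Pt) by simp)
    simpa [vsub_eq_sub] using hmem
  have hspan2 : vectorSpan ℝ ({a, b, c} : Set Pt) ≤
      Submodule.span ℝ ({b - a, c - a} : Set Pt) := by
    rw [vectorSpan_def]
    apply Submodule.span_le.mpr
    rintro x ⟨p, hp, q, hq, rfl⟩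
    have key : ∀ p ∈ ({a, b, c} : Set Pt),
        p - a ∈ Submodule.span ℝ ({b - a, c - a} : Set Pt) := by
      rintro p hp
      simp only [Set.mem_insert_iff, Set.mem_singleton_iff] at hp
      rcases hp with rfl | rfl | rfl
      · simp
      · exact Submodule.subset_span (by simp)
      · exact Submodule.subset_span (by simp)
    show p -ᵥ q ∈ _
    have hpq : p -ᵥ q = (p - a) - (q - a) := by simp [vsub_eq_sub]
    rw [hpq]
    exact Submodule.sub_mem _ (key p hp) (key q hq)
  obtain ⟨r, t, hd⟩ := Submodule.mem_span_pair.mp (hspan2 hdmem)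
  -- translate the distance hypotheses into inner-product equations
  have hda : d - a = r • (b - a) + t • (c - a) := hd.symm
  have hd' : d = a + (r • (b - a) + t • (c - a)) := by
    rw [← hda]; abel
  have hdc : d - c = r • (b - a) + (t - 1) • (c - a) := by
    rw [hd']; module
  have h₁' : ‖b - a‖ = ‖d - c‖ := by
    rw [norm_sub_rev b a, norm_sub_rev d c, ← dist_eq_norm, ← dist_eq_norm]
    exact h₁
  have h₂' : ‖b - c‖ = ‖d - a‖ := by
    rw [norm_sub_rev d a, ← dist_eq_norm, ← dist_eq_norm]
    exact h₂
  have e1 : (inner ℝ (b - a) (b - a) : ℝ) = inner ℝ (d - c) (d - c) := by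
    rw [real_inner_self_eq_norm_sq, real_inner_self_eq_norm_sq, h₁']
  have e2 : (inner ℝ ((b - a) - (c - a)) ((b - a) - (c - a)) : ℝ) = inner ℝ (d - a) (d - a) := by
    have hbc : b - c = (b - a) - (c - a) := by abel
    rw [← hbc, real_inner_self_eq_norm_sq, real_inner_self_eq_norm_sq, h₂']
  -- abstract the two edge vectors
  set u : Pt := b - a with hu
  set v : Pt := c - a with hv
  rw [hdc] at e1
  rw [hda] at e2
  simp only [inner_add_left, inner_add_right, inner_sub_left, inner_sub_right,
    real_inner_smul_left, real_inner_smul_right] at e1 e2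
  rw [real_inner_comm u v] at e1 e2
  set U : ℝ := inner ℝ u u with hU
  set W : ℝ := inner ℝ u v with hW
  set V : ℝ := inner ℝ v v with hV
  have e1' : U = r ^ 2 * U + (t - 1) ^ 2 * V + 2 * r * (t - 1) * W := by
    linear_combination e1
  have e2' : U + V - 2 * W = r ^ 2 * U + t ^ 2 * V + 2 * r * t * W := by
    linear_combination e2
  have hv0 : v ≠ 0 := sub_ne_zero.mpr hac.symm
  have hVne : V ≠ 0 := by
    rw [hV]; exact (inner_self_ne_zero (𝕜 := ℝ)).mpr hv0
  have key1 : (t - 1) * V + (r + 1) * W = 0 := by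
    linear_combination (1/2) * e1' - (1/2) * e2'
  have key2 : (r - 1) * ((r + 1) * U + (t - 1) * W) = 0 := by
    linear_combination -e1' - (t - 1) * key1
  have hUVW : U * V - W * W ≠ 0 := by
    intro h
    have hw : (inner ℝ (V • u - W • v) (V • u - W • v) : ℝ) = 0 := by
      simp only [inner_sub_left, inner_sub_right, real_inner_smul_left, real_inner_smul_right]
      rw [real_inner_comm u v]
      linear_combination V * h
    have hw0 : V • u - W • v = 0 := (inner_self_eq_zero (𝕜 := ℝ)).mp hw
    have hul : u = (V⁻¹ * W) • v := by
      have h5 : V • u = W • v := by rwa [sub_eq_zero] at hw0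
      rw [← smul_smul, ← h5, smul_smul, inv_mul_cancel₀ hVne, one_smul]
    apply hncol
    rw [collinear_iff_of_mem (show a ∈ ({a, b, c} : Set Pt) by simp)]
    refine ⟨v, ?_⟩
    intro p hp
    simp only [Set.mem_insert_iff, Set.mem_singleton_iff] at hp
    rcases hp with rfl | rfl | rfl
    · exact ⟨0, by simp⟩
    · refine ⟨V⁻¹ * W, ?_⟩
      rw [vadd_eq_add, ← hul, hu]
      abel
    · refine ⟨1, ?_⟩
      rw [vadd_eq_add, one_smul, hv]
      abel
  by_cases hr : r = 1
  · -- antiparallelogram case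
    right
    subst hr
    rw [refl_formula a c hac b, ← hv, ← hV]
    have hbm : b - midpoint ℝ a c = u - (2⁻¹ : ℝ) • v := by
      rw [hu, hv, midpoint_eq_smul_add, invOf_eq_inv]
      module
    have hib : (inner ℝ (b - midpoint ℝ a c) v : ℝ) = W - 2⁻¹ * V := by
      rw [hbm, inner_sub_left, real_inner_smul_left, ← hW, ← hV]
    have hWval : (t - 1) * V + 2 * W = 0 := by linear_combination key1
    have hcoef : 2 * (inner ℝ (b - midpoint ℝ a c) v : ℝ) / V = -t := by
      rw [hib, div_eq_iff hVne]
      linear_combination hWval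
    rw [hcoef]
    have hdval : d = b + t • v := by
      rw [hd', hu]; module
    rw [hdval]
    module
  · -- parallelogram case
    left
    have hr1 : r - 1 ≠ 0 := sub_ne_zero.mpr hr
    have key2' : (r + 1) * U + (t - 1) * W = 0 := by
      rcases mul_eq_zero.mp key2 with h | h
      · exact absurd h hr1
      · exact h
    have hr' : r = -1 := by
      have h6 : (r + 1) * (U * V - W * W) = 0 := by
        linear_combination V * key2' - W * key1
      rcases mul_eq_zero.mp h6 with h | h
      · linarith
      · exact absurd h hUVW
    have ht' : t = 1 := by
      have h7 : (t - 1) * (U * V - W * W) = 0 := by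
        linear_combination U * key1 - W * key2'
      rcases mul_eq_zero.mp h7 with h | h
      · linarith
      · exact absurd h hUVW
    rw [hr', ht'] at hd'
    rw [hd', hu, hv]
    module
end
end

section
/- Let p1, …, p6 ∈ ℝ³. Assume: p3, p4, p5, p6 lie in a 2-dimensional affine subspace P; p5 ≠ p6; p1 ∉ P; the reflection of ℝ³ across P maps p1 to p2; and the affine span Q of {p1, p2, p5, p6} is 2-dimensional. Then the reflection of p3 across the plane Q equals the reflection of p3 across the line through p5 and p6 (the affine span of {p5, p6}). -/
open EuclideanGeometry RealInnerProductSpace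

noncomputable section

/-- If `p₃, p₄, p₅, p₆` lie in a plane `P`, `p₅ ≠ p₆`, `p₁ ∉ P`, `p₂` is the mirror
image of `p₁` across `P`, and the affine span `Q` of `{p₁, p₂, p₅, p₆}` is a plane,
then reflecting `p₃` across the plane `Q` is the same as reflecting `p₃` across the
line through `p₅` and `p₆`. -/
theorem reflection_plane_eq_reflection_line
    (p₁ p₂ p₃ p₄ p₅ p₆ : Pt)
    (P : AffineSubspace ℝ Pt) [Nonempty P]
    (hPdim : Module.finrank ℝ P.direction = 2)
    (hp₃ : p₃ ∈ P) (hp₄ : p₄ ∈ P) (hp₅ : p₅ ∈ P) (hp₆ : p₆ ∈ P)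
    (hne : p₅ ≠ p₆)
    (hp₁ : p₁ ∉ P)
    (hrefl : EuclideanGeometry.reflection P p₁ = p₂)
    (hQdim : Module.finrank ℝ (affineSpan ℝ ({p₁, p₂, p₅, p₆} : Set Pt)).direction = 2) :
    haveI : Nonempty (affineSpan ℝ ({p₁, p₂, p₅, p₆} : Set Pt)) :=
      ⟨⟨p₁, subset_affineSpan ℝ _ (by simp)⟩⟩
    haveI : Nonempty (affineSpan ℝ ({p₅, p₆} : Set Pt)) :=
      ⟨⟨p₅, subset_affineSpan ℝ _ (by simp)⟩⟩
    EuclideanGeometry.reflection (affineSpan ℝ ({p₁, p₂, p₅, p₆} : Set Pt)) p₃ =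
      EuclideanGeometry.reflection (affineSpan ℝ ({p₅, p₆} : Set Pt)) p₃ := by
  set Q := affineSpan ℝ ({p₁, p₂, p₅, p₆} : Set Pt) with hQdef
  set L := affineSpan ℝ ({p₅, p₆} : Set Pt) with hLdef
  haveI : Nonempty Q := ⟨⟨p₁, subset_affineSpan ℝ _ (by simp)⟩⟩
  haveI : Nonempty L := ⟨⟨p₅, subset_affineSpan ℝ _ (by simp)⟩⟩
  -- basic memberships
  have hp₁Q : p₁ ∈ Q := subset_affineSpan ℝ _ (by simp)
  have hp₂Q : p₂ ∈ Q := subset_affineSpan ℝ _ (by simp)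
  have hp₅Q : p₅ ∈ Q := subset_affineSpan ℝ _ (by simp)
  have hp₆Q : p₆ ∈ Q := subset_affineSpan ℝ _ (by simp)
  have hp₅L : p₅ ∈ L := subset_affineSpan ℝ _ (by simp)
  have hp₆L : p₆ ∈ L := subset_affineSpan ℝ _ (by simp)
  have hLP : L ≤ P := by
    rw [hLdef, affineSpan_le]
    rintro x hx
    rcases hx with rfl | hx
    · exact hp₅
    · rcases hx with rfl; exact hp₆
  have hLQ : L ≤ Q := by
    rw [hLdef, affineSpan_le]
    rintro x hx
    rcases hx with rfl | hx
    · exact hp₅Q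
    · rcases hx with rfl; exact hp₆Q
  -- the two key direction vectors
  set v : Pt := p₂ -ᵥ p₁ with hvdef
  set w : Pt := p₆ -ᵥ p₅ with hwdef
  have hwP : w ∈ P.direction := AffineSubspace.vsub_mem_direction hp₆ hp₅
  have hwL : w ∈ L.direction := AffineSubspace.vsub_mem_direction hp₆L hp₅L
  have hvQ : v ∈ Q.direction := AffineSubspace.vsub_mem_direction hp₂Q hp₁Q
  have hwQ : w ∈ Q.direction := AffineSubspace.vsub_mem_direction hp₆Q hp₅Q
  have hwne : w ≠ 0 := by
    simpa [hwdef, sub_eq_zero] using (Ne.symm hne)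
  -- v is orthogonal to the direction of P
  have hvorth : v ∈ P.directionᗮ := by
    have h1 : p₁ -ᵥ (orthogonalProjection P p₁ : Pt) ∈ P.directionᗮ :=
      vsub_orthogonalProjection_mem_direction_orthogonal P p₁
    have h2 : v = (2 : ℝ) • ((orthogonalProjection P p₁ : Pt) -ᵥ p₁) := by
      rw [hvdef, ← hrefl, EuclideanGeometry.reflection_apply']
      simp only [vadd_vsub_assoc]
      module
    rw [h2]
    refine Submodule.smul_mem _ _ ?_
    rw [← neg_vsub_eq_vsub_rev]
    exact Submodule.neg_mem _ h1
  have hvne : v ≠ 0 := by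
    intro h
    have : p₁ = p₂ := by rwa [hvdef, vsub_eq_zero_iff_eq, eq_comm] at h
    apply hp₁
    rw [← EuclideanGeometry.reflection_eq_self_iff p₁]
    rw [hrefl, ← this]
  have hvw : ⟪w, v⟫ = 0 := hvorth w hwP
  -- Q.direction is the span of v and w
  have hli : LinearIndependent ℝ ![v, w] := by
    rw [LinearIndependent.pair_iff' hvne]
    intro a ha
    apply hwne
    have : ⟪w, w⟫ = 0 := by
      nth_rewrite 1 [← ha]
      rw [real_inner_smul_left, real_inner_comm, hvw, mul_zero]
    exact inner_self_eq_zero.mp this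
  have hspan : Submodule.span ℝ ({v, w} : Set Pt) = Q.direction := by
    apply Submodule.eq_of_le_of_finrank_le
    · rw [Submodule.span_le]
      rintro x hx
      rcases hx with rfl | hx
      · exact hvQ
      · rcases hx with rfl; exact hwQ
    · rw [hQdim]
      have : ({v, w} : Set Pt) = Set.range ![v, w] := by
        simp [Matrix.range_cons, Matrix.range_empty, Set.pair_comm]
      rw [this, finrank_span_eq_card hli]
      simp
  -- the orthogonal projection of p₃ onto L
  set m : Pt := ↑(orthogonalProjection L p₃) with hmdef
  have hmL : m ∈ L := (orthogonalProjection L p₃).2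
  have hmQ : m ∈ Q := hLQ hmL
  have hmP : m ∈ P := hLP hmL
  have hdiffL : p₃ -ᵥ m ∈ L.directionᗮ :=
    vsub_orthogonalProjection_mem_direction_orthogonal L p₃
  have hdiffP : p₃ -ᵥ m ∈ P.direction := AffineSubspace.vsub_mem_direction hp₃ hmP
  -- p₃ -ᵥ m is orthogonal to Q.direction
  have hdiffQ : p₃ -ᵥ m ∈ Q.directionᗮ := by
    rw [← hspan]
    rw [Submodule.mem_orthogonal]
    intro u hu
    rcases Submodule.mem_span_pair.mp hu with ⟨a, b, rfl⟩
    rw [inner_add_left, real_inner_smul_left, real_inner_smul_left]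
    have h1 : ⟪v, p₃ -ᵥ m⟫ = 0 :=
      (Submodule.mem_orthogonal' _ _).mp hvorth _ hdiffP
    have h2 : ⟪w, p₃ -ᵥ m⟫ = 0 :=
      real_inner_comm (p₃ -ᵥ m) w ▸ (Submodule.mem_orthogonal' _ _).mp hdiffL _ hwL
    rw [h1, h2]; ring
  -- hence the projections onto Q and L agree
  rw [reflection_eq_iff_orthogonalProjection_eq]
  have : orthogonalProjection Q p₃ = ⟨m, hmQ⟩ := by
    have := orthogonalProjection_vadd_eq_self (s := Q) hmQ hdiffQ
    rwa [vsub_vadd] at this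
  rw [this, ← hmdef]
end
end

section
/- Let λ be a labeling of the octahedral graph G_oct such that some face {i, j, k} is degenerate, meaning λ({i,k}) = λ({i,j}) + λ({j,k}) for some ordering of its vertices. Then λ is not flexible: there are only finitely many pairwise non-congruent realizations compatible with λ. -/
open EuclideanGeometry
open scoped RealInnerProductSpace

noncomputable section

/-- Two realizations are congruent if they differ by an isometry of `ℝ³`. -/
def OctCongruent (ρ₁ ρ₂ : ℕ → Pt) : Prop :=
  ∃ σ : Pt ≃ᵢ Pt, ∀ i ∈ octV, ρ₁ i = σ (ρ₂ i)

/-! ### Auxiliary material -/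

/-- The partner (antipodal) vertex. -/
def opp : ℕ → ℕ
  | 1 => 2 | 2 => 1 | 3 => 4 | 4 => 3 | 5 => 6 | 6 => 5 | _ => 0

instance instDecIsOctEdge (i j : ℕ) : Decidable (IsOctEdge i j) := by
  unfold IsOctEdge; infer_instance

lemma collinear_smul {u v : Pt} {a b : ℝ} (ha : 0 < a) (hb : 0 < b)
    (hu : ‖u‖ = a) (hv : ‖v‖ = b) (huv : ‖u + v‖ = a + b) :
    b • u = a • v := by
  have hinner : ⟪u, v⟫ = a * b := by
    have h := norm_add_sq_real u v
    rw [hu, hv, huv] at h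
    nlinarith
  have h0 : ‖b • u - a • v‖ ^ 2 = 0 := by
    rw [norm_sub_sq_real, norm_smul, norm_smul, real_inner_smul_left, real_inner_smul_right,
      hinner, hu, hv, Real.norm_eq_abs, Real.norm_eq_abs, abs_of_pos ha, abs_of_pos hb]
    ring
  have h1 : ‖b • u - a • v‖ = 0 := sq_eq_zero_iff.mp h0
  rwa [norm_eq_zero, sub_eq_zero] at h1

lemma keyA {A B C P : Pt} {a b : ℝ} (ha : 0 < a) (hb : 0 < b)
    (hAB : dist A B = a) (hBC : dist B C = b) (hAC : dist A C = a + b) :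
    dist P A ^ 2 = dist P B ^ 2 + a ^ 2 + (a / b) * (dist P B ^ 2 + b ^ 2 - dist P C ^ 2) := by
  have hu : ‖B - A‖ = a := by rw [← hAB, dist_eq_norm, norm_sub_rev]
  have hv : ‖C - B‖ = b := by rw [← hBC, dist_eq_norm, norm_sub_rev]
  have huv : ‖(B - A) + (C - B)‖ = a + b := by
    have : (B - A) + (C - B) = C - A := by abel
    rw [this, ← hAC, dist_eq_norm, norm_sub_rev]
  have hsm := collinear_smul ha hb hu hv huv
  have h1 : 2 * ⟪P - B, C - B⟫ = ‖P - B‖ ^ 2 + b ^ 2 - ‖P - C‖ ^ 2 := by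
    have he : (P - B) - (C - B) = P - C := by abel
    have h := norm_sub_sq_real (P - B) (C - B)
    rw [he, hv] at h
    linarith
  have h2 : b * (2 * ⟪P - B, B - A⟫) = a * (2 * ⟪P - B, C - B⟫) := by
    have : ⟪P - B, b • (B - A)⟫ = ⟪P - B, a • (C - B)⟫ := by rw [hsm]
    rw [real_inner_smul_right, real_inner_smul_right] at this
    linarith
  have h3 : ‖P - A‖ ^ 2 = ‖P - B‖ ^ 2 + 2 * ⟪P - B, B - A⟫ + a ^ 2 := by
    have he : P - A = (P - B) + (B - A) := by abel
    rw [he, norm_add_sq_real, hu]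
  have h4 : 2 * ⟪P - B, B - A⟫ = (a / b) * (‖P - B‖ ^ 2 + b ^ 2 - ‖P - C‖ ^ 2) := by
    rw [← h1, div_mul_eq_mul_div, eq_div_iff hb.ne']
    linarith
  rw [dist_eq_norm, dist_eq_norm, dist_eq_norm]
  rw [h3, h4]
  ring

lemma keyB {A B C P : Pt} {a b : ℝ} (ha : 0 < a) (hb : 0 < b)
    (hAB : dist A B = a) (hBC : dist B C = b) (hAC : dist A C = a + b) :
    dist P B ^ 2 = dist P A ^ 2 + a ^ 2
      - (a / (a + b)) * (dist P A ^ 2 + (a + b) ^ 2 - dist P C ^ 2) := by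
  have hu : ‖B - A‖ = a := by rw [← hAB, dist_eq_norm, norm_sub_rev]
  have hv : ‖C - B‖ = b := by rw [← hBC, dist_eq_norm, norm_sub_rev]
  have huv : ‖(B - A) + (C - B)‖ = a + b := by
    have : (B - A) + (C - B) = C - A := by abel
    rw [this, ← hAC, dist_eq_norm, norm_sub_rev]
  have hsm := collinear_smul ha hb hu hv huv
  have hw : (a + b) • (B - A) = a • (C - A) := by
    have : (a + b) • (B - A) = a • (B - A) + b • (B - A) := by rw [add_smul]
    rw [this, hsm, ← smul_add]
    congr 1
    abel
  have h1 : 2 * ⟪P - A, C - A⟫ = ‖P - A‖ ^ 2 + (a + b) ^ 2 - ‖P - C‖ ^ 2 := by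
    have he : (P - A) - (C - A) = P - C := by abel
    have h := norm_sub_sq_real (P - A) (C - A)
    have hca : ‖C - A‖ = a + b := by rw [← hAC, dist_eq_norm, norm_sub_rev]
    rw [he, hca] at h
    linarith
  have h2 : (a + b) * (2 * ⟪P - A, B - A⟫) = a * (2 * ⟪P - A, C - A⟫) := by
    have : ⟪P - A, (a + b) • (B - A)⟫ = ⟪P - A, a • (C - A)⟫ := by rw [hw]
    rw [real_inner_smul_right, real_inner_smul_right] at this
    linarith
  have h3 : ‖P - B‖ ^ 2 = ‖P - A‖ ^ 2 - 2 * ⟪P - A, B - A⟫ + a ^ 2 := by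
    have he : P - B = (P - A) - (B - A) := by abel
    rw [he, norm_sub_sq_real, hu]
  have h4 : 2 * ⟪P - A, B - A⟫ = (a / (a + b)) * (‖P - A‖ ^ 2 + (a + b) ^ 2 - ‖P - C‖ ^ 2) := by
    have hab : a + b ≠ 0 := by positivity
    rw [← h1, div_mul_eq_mul_div, eq_div_iff hab]
    linarith
  rw [dist_eq_norm, dist_eq_norm, dist_eq_norm]
  rw [h3, h4]
  ring

instance perpBisector_nonempty_inst (x y : Pt) :
    Nonempty (AffineSubspace.perpBisector x y) :=
  (AffineSubspace.perpBisector_nonempty).to_subtype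

lemma reflection_perpBisector (x y : Pt) :
    EuclideanGeometry.reflection (AffineSubspace.perpBisector x y) y = x := by
  have hm : midpoint ℝ x y ∈ AffineSubspace.perpBisector x y :=
    AffineSubspace.midpoint_mem_perpBisector x y
  have hv : y -ᵥ midpoint ℝ x y ∈ (AffineSubspace.perpBisector x y).directionᗮ := by
    rw [AffineSubspace.direction_perpBisector]
    apply Submodule.le_orthogonal_orthogonal
    rw [right_vsub_midpoint]
    exact Submodule.smul_mem _ _ (Submodule.mem_span_singleton_self _)
  have hproj : (EuclideanGeometry.orthogonalProjection (AffineSubspace.perpBisector x y) y : Pt)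
      = midpoint ℝ x y := by
    have hy : (y -ᵥ midpoint ℝ x y) +ᵥ midpoint ℝ x y = y := vsub_vadd _ _
    have h2 := EuclideanGeometry.orthogonalProjection_vadd_eq_self hm hv
    rw [hy] at h2
    rw [h2]
  rw [EuclideanGeometry.reflection_apply', hproj, midpoint_vsub_right]
  have : ((⅟2 : ℝ) • (x -ᵥ y)) +ᵥ midpoint ℝ x y = (⅟2 : ℝ) • (x - y) + (⅟2 : ℝ) • (x + y) := by
    rw [midpoint_eq_smul_add]
    rfl
  rw [this, ← smul_add]
  have hxy : (x - y) + (x + y) = (2:ℝ) • x := by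
    rw [two_smul]
    abel
  rw [hxy, smul_smul, invOf_mul_self', one_smul]

lemma exists_matching (f g : ℕ → Pt) :
    ∀ l : List ℕ, (∀ m ∈ l, ∀ n ∈ l, dist (f m) (f n) = dist (g m) (g n)) →
      ∃ σ : Pt ≃ᵃⁱ[ℝ] Pt, ∀ m ∈ l, f m = σ (g m)
  | [], _ => ⟨AffineIsometryEquiv.refl ℝ Pt, by simp⟩
  | a :: t, h => by
    obtain ⟨σ, hσ⟩ := exists_matching f g t
      (fun m hm n hn => h m (List.mem_cons_of_mem _ hm) n (List.mem_cons_of_mem _ hn))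
    set s := AffineSubspace.perpBisector (f a) (σ (g a)) with hs
    refine ⟨σ.trans (EuclideanGeometry.reflection s), fun m hm => ?_⟩
    rcases List.mem_cons.mp hm with rfl | hm
    · rw [AffineIsometryEquiv.coe_trans, Function.comp_apply]
      exact (reflection_perpBisector (f m) (σ (g m))).symm
    · have hfix : f m ∈ s := by
        rw [hs, AffineSubspace.mem_perpBisector_iff_dist_eq]
        calc dist (f m) (f a) = dist (g m) (g a) :=
              h m (List.mem_cons_of_mem _ hm) a List.mem_cons_self
          _ = dist (σ (g m)) (σ (g a)) := (σ.dist_map _ _).symm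
          _ = dist (f m) (σ (g a)) := by rw [← hσ m hm]
      rw [AffineIsometryEquiv.coe_trans, Function.comp_apply, ← hσ m hm]
      exact ((EuclideanGeometry.reflection_eq_self_iff _).mpr hfix).symm

lemma main_congr (lam : Sym2 ℕ → ℝ)
    (hpos : ∀ m n, IsOctEdge m n → 0 < lam s(m, n))
    {i j k : ℕ}
    (hdeg : lam s(i, k) = lam s(i, j) + lam s(j, k))
    (eij : IsOctEdge i j) (ejk : IsOctEdge j k) (eik : IsOctEdge i k)
    (e1 : IsOctEdge (opp i) j) (e2 : IsOctEdge (opp i) k)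
    (e3 : IsOctEdge (opp j) i) (e4 : IsOctEdge (opp j) k)
    (e5 : IsOctEdge (opp k) i) (e6 : IsOctEdge (opp k) j)
    (hcov : ∀ m ∈ octV, ∀ n ∈ octV, m ≠ n → (IsOctEdge m n ∨
        ((m = i ∧ n = opp i) ∨ (m = opp i ∧ n = i) ∨ (m = j ∧ n = opp j) ∨
          (m = opp j ∧ n = j) ∨ (m = k ∧ n = opp k) ∨ (m = opp k ∧ n = k))))
    {ρ₁ ρ₂ : ℕ → Pt} (h₁ : Compatible lam ρ₁) (h₂ : Compatible lam ρ₂) :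
    OctCongruent ρ₁ ρ₂ := by
  set a := lam s(i, j) with ha'
  set b := lam s(j, k) with hb'
  have ha : 0 < a := hpos _ _ eij
  have hb : 0 < b := hpos _ _ ejk
  have hdiag : ∀ ρ : ℕ → Pt, Compatible lam ρ →
      (dist (ρ (opp i)) (ρ i) ^ 2
          = lam s(opp i, j) ^ 2 + a ^ 2
            + (a / b) * (lam s(opp i, j) ^ 2 + b ^ 2 - lam s(opp i, k) ^ 2)
        ∧ dist (ρ (opp j)) (ρ j) ^ 2
          = lam s(opp j, i) ^ 2 + a ^ 2
            - (a / (a + b)) * (lam s(opp j, i) ^ 2 + (a + b) ^ 2 - lam s(opp j, k) ^ 2)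
        ∧ dist (ρ (opp k)) (ρ k) ^ 2
          = lam s(opp k, j) ^ 2 + b ^ 2
            + (b / a) * (lam s(opp k, j) ^ 2 + a ^ 2 - lam s(opp k, i) ^ 2)) := by
    intro ρ h
    have hab : dist (ρ i) (ρ j) = a := h i j eij
    have hbc : dist (ρ j) (ρ k) = b := h j k ejk
    have hac : dist (ρ i) (ρ k) = a + b := by rw [h i k eik]; exact hdeg
    refine ⟨?_, ?_, ?_⟩
    · have := keyA (P := ρ (opp i)) ha hb hab hbc hac
      rwa [h (opp i) j e1, h (opp i) k e2] at this
    · have := keyB (P := ρ (opp j)) ha hb hab hbc hac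
      rwa [h (opp j) i e3, h (opp j) k e4] at this
    · have := keyA (A := ρ k) (B := ρ j) (C := ρ i) (P := ρ (opp k)) hb ha
        (by rw [dist_comm]; exact hbc) (by rw [dist_comm]; exact hab)
        (by rw [dist_comm, hac]; ring)
      rwa [h (opp k) j e6, h (opp k) i e5] at this
  have sq_to_eq : ∀ {x y x' y' : Pt}, dist x y ^ 2 = dist x' y' ^ 2 → dist x y = dist x' y' := by
    intro x y x' y' hsq
    nlinarith [dist_nonneg (x := x) (y := y), dist_nonneg (x := x') (y := y')]
  have hdists : ∀ m ∈ octV, ∀ n ∈ octV, dist (ρ₁ m) (ρ₁ n) = dist (ρ₂ m) (ρ₂ n) := by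
    intro m hm n hn
    by_cases hmn : m = n
    · subst hmn; simp
    obtain ⟨d1a, d2a, d3a⟩ := hdiag ρ₁ h₁
    obtain ⟨d1b, d2b, d3b⟩ := hdiag ρ₂ h₂
    rcases hcov m hm n hn hmn with he | hc
    · rw [h₁ m n he, h₂ m n he]
    rcases hc with ⟨h5, h6⟩ | ⟨h5, h6⟩ | ⟨h5, h6⟩ | ⟨h5, h6⟩ | ⟨h5, h6⟩ | ⟨h5, h6⟩
    · rw [h5, h6, dist_comm (ρ₁ i), dist_comm (ρ₂ i)]
      exact sq_to_eq (d1a.trans d1b.symm)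
    · rw [h5, h6]
      exact sq_to_eq (d1a.trans d1b.symm)
    · rw [h5, h6, dist_comm (ρ₁ j), dist_comm (ρ₂ j)]
      exact sq_to_eq (d2a.trans d2b.symm)
    · rw [h5, h6]
      exact sq_to_eq (d2a.trans d2b.symm)
    · rw [h5, h6, dist_comm (ρ₁ k), dist_comm (ρ₂ k)]
      exact sq_to_eq (d3a.trans d3b.symm)
    · rw [h5, h6]
      exact sq_to_eq (d3a.trans d3b.symm)
  have hoct : ∀ m ∈ ([1,2,3,4,5,6] : List ℕ), m ∈ octV := by decide
  have hoct2 : ∀ m ∈ octV, m ∈ ([1,2,3,4,5,6] : List ℕ) := by decide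
  obtain ⟨σ, hσ⟩ := exists_matching ρ₁ ρ₂ [1,2,3,4,5,6]
    (fun m hm n hn => hdists m (hoct m hm) n (hoct n hn))
  refine ⟨σ.toIsometryEquiv, fun m hm => ?_⟩
  rw [AffineIsometryEquiv.coe_toIsometryEquiv]
  exact hσ m (hoct2 m hm)

/-- A labeling of the octahedral graph with a degenerate face is not flexible: any set
of pairwise non-congruent compatible realizations is finite. -/
theorem degenerate_face_not_flexible
    (lam : Sym2 ℕ → ℝ)
    (hpos : ∀ i j, IsOctEdge i j → 0 < lam s(i, j))
    (hdeg : ∃ i j k, IsOctFace i j k ∧ lam s(i, k) = lam s(i, j) + lam s(j, k)) :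
    ∀ S : Set (ℕ → Pt), (∀ ρ ∈ S, Compatible lam ρ) →
      (∀ ρ₁ ∈ S, ∀ ρ₂ ∈ S, ρ₁ ≠ ρ₂ → ¬ OctCongruent ρ₁ ρ₂) →
      S.Finite := by
  intro S hS hS2
  obtain ⟨i, j, k, hface, hdeg⟩ := hdeg
  have hcong : ∀ ρ₁ ∈ S, ∀ ρ₂ ∈ S, OctCongruent ρ₁ ρ₂ := by
    intro ρ₁ hρ₁ ρ₂ hρ₂
    have h₁ := hS ρ₁ hρ₁
    have h₂ := hS ρ₂ hρ₂
    have hmem : ∀ F : Finset ℕ, ({i, j, k} : Finset ℕ) = F → i ∈ F ∧ j ∈ F ∧ k ∈ F := by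
      intro F hF
      refine ⟨hF ▸ ?_, hF ▸ ?_, hF ▸ ?_⟩ <;> simp
    unfold IsOctFace at hface
    simp only [Finset.mem_insert, Finset.mem_singleton] at hface
    rcases hface with hF|hF|hF|hF|hF|hF|hF|hF <;>
      obtain ⟨hi, hj, hk⟩ := hmem _ hF <;>
      fin_cases hi <;> fin_cases hj <;> fin_cases hk <;>
      first
        | exact absurd hF (by decide)
        | exact main_congr lam hpos hdeg (by decide) (by decide) (by decide) (by decide)
            (by decide) (by decide) (by decide) (by decide) (by decide) (by decide) h₁ h₂
  have hsub : S.Subsingleton := by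
    intro ρ₁ hρ₁ ρ₂ hρ₂
    by_contra hne
    exact hS2 ρ₁ hρ₁ ρ₂ hρ₂ hne (hcong ρ₁ hρ₁ ρ₂ hρ₂)
  exact hsub.finite
end
end
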